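/- arXiv:1112.4757 — 4 statements merged into one kernel-verified Lean document; each statement's English description precedes it below -/
import Mathlib

section
/- Let K, L be convex bodies in ℝⁿ with M(K,L) = |K ∩ (-L)|. For every 0 ≤ θ₀ ≤ θ < 1, (1 - θ^{1/n})·(K +_{θ₀} L) ⊆ (1 - θ₀^{1/n})·(K +_θ L). -/
open MeasureTheory Set
open scoped Pointwise ENNReal NNReal

section Helpers

variable {α β : Type*}

lemma image_add_of_map_add [Add α] [Add β] (e : α → β)
    (he : ∀ x y, e (x + y) = e x + e y) (S T : Set α) :
    e '' (S + T) = e '' S + e '' T := by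
  ext b
  constructor
  · rintro ⟨x, hx, rfl⟩
    rcases Set.mem_add.1 hx with ⟨s, hs, t, ht, rfl⟩
    exact Set.mem_add.2 ⟨e s, ⟨s, hs, rfl⟩, e t, ⟨t, ht, rfl⟩, (he s t).symm⟩
  · rintro hb
    rcases Set.mem_add.1 hb with ⟨u, ⟨s, hs, rfl⟩, v, ⟨t, ht, rfl⟩, rfl⟩
    exact ⟨s + t, Set.mem_add.2 ⟨s, hs, t, ht, rfl⟩, he s t⟩

lemma image_smul_of_map_smul [SMul ℝ α] [SMul ℝ β] (e : α → β)
    (he : ∀ (c : ℝ) x, e (c • x) = c • e x) (c : ℝ) (S : Set α) :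
    e '' (c • S) = c • e '' S := by
  ext b
  constructor
  · rintro ⟨x, ⟨s, hs, rfl⟩, rfl⟩
    exact ⟨e s, ⟨s, hs, rfl⟩, (he c s).symm⟩
  · rintro ⟨u, ⟨s, hs, rfl⟩, rfl⟩
    exact ⟨c • s, ⟨s, hs, rfl⟩, he c s⟩

end Helpers

/-- One-dimensional sumset inequality for compact sets. -/
lemma volume_add_le_volume_add_compact {C D : Set ℝ} (hC : IsCompact C) (hD : IsCompact D)
    (hCne : C.Nonempty) (hDne : D.Nonempty) :
    volume C + volume D ≤ volume (C + D) := by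
  set U : Set ℝ := (fun x => x + sSup D) '' C with hU
  set V : Set ℝ := (fun x => sInf C + x) '' D with hV
  have hUc : IsCompact U := hC.image (continuous_id.add continuous_const)
  have hVc : IsCompact V := hD.image (continuous_const.add continuous_id)
  have hUsub : U ⊆ C + D := by
    rintro _ ⟨c, hc, rfl⟩
    exact Set.mem_add.2 ⟨c, hc, sSup D, hD.sSup_mem hDne, rfl⟩
  have hVsub : V ⊆ C + D := by
    rintro _ ⟨d, hd, rfl⟩
    exact Set.mem_add.2 ⟨sInf C, hC.sInf_mem hCne, d, hd, rfl⟩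
  have hUV : U ∩ V ⊆ {sInf C + sSup D} := by
    rintro x ⟨⟨c, hc, rfl⟩, ⟨d, hd, hx⟩⟩
    have h1 : sInf C + sSup D ≤ c + sSup D :=
      add_le_add_left (csInf_le hC.bddBelow hc) _
    have hx' : sInf C + d = c + sSup D := hx
    have h2 : c + sSup D ≤ sInf C + sSup D := by
      rw [← hx']
      exact add_le_add_right (le_csSup hD.bddAbove hd) _
    simp [le_antisymm h2 h1]
  have hvolU : volume U = volume C := by
    rw [hU, Set.image_add_right, measure_preimage_add_right]
  have hvolV : volume V = volume D := by
    rw [hV, Set.image_add_left, measure_preimage_add]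
  have key : volume U + volume V = volume (U ∪ V) + volume (U ∩ V) :=
    (measure_union_add_inter U hVc.isClosed.measurableSet).symm
  have hUVzero : volume (U ∩ V) = 0 :=
    le_antisymm (le_trans (measure_mono hUV) (by simp)) zero_le
  calc volume C + volume D = volume U + volume V := by rw [hvolU, hvolV]
    _ = volume (U ∪ V) + volume (U ∩ V) := key
    _ = volume (U ∪ V) := by rw [hUVzero, add_zero]
    _ ≤ volume (C + D) := measure_mono (Set.union_subset hUsub hVsub)

/-- Scaled one-dimensional sumset inequality for measurable sets of finite volume. -/
lemma onedim_meas {F G : Set ℝ} (hF : MeasurableSet F) (hG : MeasurableSet G)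
    (hFne : F.Nonempty) (hGne : G.Nonempty) (hFfin : volume F ≠ ∞) (hGfin : volume G ≠ ∞)
    {l : ℝ} (hl0 : 0 < l) (hl1 : l < 1) :
    ENNReal.ofReal l * volume F + ENNReal.ofReal (1 - l) * volume G
      ≤ volume (l • F + (1 - l) • G) := by
  have h1l : (0:ℝ) < 1 - l := by linarith
  refine ENNReal.le_of_forall_pos_le_add fun ε hε _ => ?_
  have hε2 : ((ε : ℝ≥0∞) / 2) ≠ 0 := by
    simp [ENNReal.div_eq_zero_iff, (by exact_mod_cast hε.ne' : (ε:ℝ≥0∞) ≠ 0)]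
  obtain ⟨K₁, hK₁F, hK₁c, hK₁v⟩ := hF.exists_isCompact_lt_add hFfin hε2
  obtain ⟨K₂, hK₂G, hK₂c, hK₂v⟩ := hG.exists_isCompact_lt_add hGfin hε2
  obtain ⟨x₀, hx₀⟩ := hFne
  obtain ⟨y₀, hy₀⟩ := hGne
  set C := K₁ ∪ {x₀} with hC
  set D := K₂ ∪ {y₀} with hD
  have hCc : IsCompact C := hK₁c.union isCompact_singleton
  have hDc : IsCompact D := hK₂c.union isCompact_singleton
  have hCF : C ⊆ F := Set.union_subset hK₁F (by simpa using hx₀)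
  have hDG : D ⊆ G := Set.union_subset hK₂G (by simpa using hy₀)
  have hCv : volume F < volume C + ε / 2 :=
    hK₁v.trans_le (add_le_add_left (measure_mono Set.subset_union_left) _)
  have hDv : volume G < volume D + ε / 2 :=
    hK₂v.trans_le (add_le_add_left (measure_mono Set.subset_union_left) _)
  have hsmulC : volume (l • C) = ENNReal.ofReal l * volume C := by
    have := Measure.addHaar_smul_of_nonneg (volume : Measure ℝ) hl0.le C
    simpa using this
  have hsmulD : volume ((1-l) • D) = ENNReal.ofReal (1-l) * volume D := by
    have := Measure.addHaar_smul_of_nonneg (volume : Measure ℝ) h1l.le D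
    simpa using this
  have hsum : volume (l • C) + volume ((1-l) • D) ≤ volume (l • C + (1-l) • D) :=
    volume_add_le_volume_add_compact (hCc.smul l) (hDc.smul (1-l))
      (Set.Nonempty.smul_set (⟨x₀, Set.mem_union_right _ rfl⟩ : C.Nonempty))
      (Set.Nonempty.smul_set (⟨y₀, Set.mem_union_right _ rfl⟩ : D.Nonempty))
  have hsub : l • C + (1-l) • D ⊆ l • F + (1-l) • G :=
    Set.add_subset_add (Set.smul_set_mono hCF) (Set.smul_set_mono hDG)
  have hlle : ENNReal.ofReal l ≤ 1 := by
    simp [ENNReal.ofReal_le_one, hl1.le]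
  have h1lle : ENNReal.ofReal (1-l) ≤ 1 := by
    simp [ENNReal.ofReal_le_one]; linarith
  calc ENNReal.ofReal l * volume F + ENNReal.ofReal (1-l) * volume G
      ≤ ENNReal.ofReal l * (volume C + ε/2) + ENNReal.ofReal (1-l) * (volume D + ε/2) := by
        gcongr <;> first | exact hCv.le | exact hDv.le
    _ ≤ (ENNReal.ofReal l * volume C + ENNReal.ofReal (1-l) * volume D) + (ε/2 + ε/2) := by
        rw [mul_add, mul_add]
        have e1 : ENNReal.ofReal l * (ε/2 : ℝ≥0∞) ≤ ε/2 := by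
          calc ENNReal.ofReal l * (ε/2 : ℝ≥0∞) ≤ 1 * (ε/2) := by gcongr
            _ = ε/2 := one_mul _
        have e2 : ENNReal.ofReal (1-l) * (ε/2 : ℝ≥0∞) ≤ ε/2 := by
          calc ENNReal.ofReal (1-l) * (ε/2 : ℝ≥0∞) ≤ 1 * (ε/2) := by gcongr
            _ = ε/2 := one_mul _
        calc ENNReal.ofReal l * volume C + ENNReal.ofReal l * (ε/2)
              + (ENNReal.ofReal (1-l) * volume D + ENNReal.ofReal (1-l) * (ε/2))
            ≤ ENNReal.ofReal l * volume C + ε/2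
              + (ENNReal.ofReal (1-l) * volume D + ε/2) := by gcongr
          _ = (ENNReal.ofReal l * volume C + ENNReal.ofReal (1-l) * volume D) + (ε/2 + ε/2) := by
              ring
    _ ≤ volume (l • F + (1-l) • G) + ε := by
        rw [ENNReal.add_halves]
        gcongr
        rw [← hsmulC, ← hsmulD]
        exact hsum.trans (measure_mono hsub)

/-- Weighted AM-GM in `ℝ≥0∞` for finite arguments. -/
lemma engm {X Y : ℝ≥0∞} (hX : X ≠ ∞) (hY : Y ≠ ∞) {l : ℝ} (hl0 : 0 < l) (hl1 : l < 1) :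
    X ^ l * Y ^ (1 - l) ≤ ENNReal.ofReal l * X + ENNReal.ofReal (1 - l) * Y := by
  have h1l : (0:ℝ) < 1 - l := by linarith
  lift X to ℝ≥0 using hX
  lift Y to ℝ≥0 using hY
  set w₁ : ℝ≥0 := ⟨l, hl0.le⟩ with hw₁
  set w₂ : ℝ≥0 := ⟨1 - l, h1l.le⟩ with hw₂
  have hw : w₁ + w₂ = 1 := by
    rw [hw₁, hw₂]; apply NNReal.eq; show l + (1 - l) = 1; ring
  have key := NNReal.geom_mean_le_arith_mean2_weighted w₁ w₂ X Y hw
  have e1 : (X : ℝ≥0∞) ^ l = ((X ^ l : ℝ≥0) : ℝ≥0∞) := (ENNReal.coe_rpow_of_nonneg X hl0.le).symm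
  have e2 : (Y : ℝ≥0∞) ^ (1 - l) = ((Y ^ (1-l) : ℝ≥0) : ℝ≥0∞) :=
    (ENNReal.coe_rpow_of_nonneg Y h1l.le).symm
  have e3 : ENNReal.ofReal l = (w₁ : ℝ≥0∞) := by
    rw [ENNReal.ofReal]; congr 1; ext; simp [hw₁, Real.toNNReal, hl0.le]; rfl
  have e4 : ENNReal.ofReal (1 - l) = (w₂ : ℝ≥0∞) := by
    rw [ENNReal.ofReal]; congr 1; ext; simp [hw₂, Real.toNNReal, h1l.le]; rfl
  rw [e1, e2, e3, e4, ← ENNReal.coe_mul, ← ENNReal.coe_mul, ← ENNReal.coe_mul, ← ENNReal.coe_add]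
  exact_mod_cast key

/-- One-dimensional Prékopa–Leindler-type inequality. -/
lemma dim1 {f g h : ℝ → ℝ≥0∞} (hf : Measurable f) (hg : Measurable g) (hh : Measurable h)
    {l : ℝ} (hl0 : 0 < l) (hl1 : l < 1)
    (hMf : (⨆ s, f s) ≠ ∞) (hMg : (⨆ s, g s) ≠ ∞)
    (hIf : (∫⁻ s, f s) ≠ ∞) (hIg : (∫⁻ s, g s) ≠ ∞)
    (hyp : ∀ s t, f s ^ l * g t ^ (1 - l) ≤ h (l * s + (1 - l) * t)) :
    (∫⁻ s, f s) ^ l * (∫⁻ s, g s) ^ (1 - l) ≤ ∫⁻ s, h s := by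
  have h1l : (0:ℝ) < 1 - l := by linarith
  by_cases hf0 : (⨆ s, f s) = 0
  · have hz : (∫⁻ s, f s) = 0 := by
      have : f = fun _ => 0 := funext fun s => le_antisymm ((le_iSup f s).trans_eq hf0) zero_le
      simp [this]
    rw [hz, ENNReal.zero_rpow_of_pos hl0, zero_mul]
    exact zero_le
  by_cases hg0 : (⨆ s, g s) = 0
  · have hz : (∫⁻ s, g s) = 0 := by
      have : g = fun _ => 0 := funext fun s => le_antisymm ((le_iSup g s).trans_eq hg0) zero_le
      simp [this]
    rw [hz, ENNReal.zero_rpow_of_pos h1l, mul_zero]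
    exact zero_le
  set Mf := ⨆ s, f s with hMfdef
  set Mg := ⨆ s, g s with hMgdef
  have hMfpos : 0 < Mf := pos_iff_ne_zero.2 hf0
  have hMgpos : 0 < Mg := pos_iff_ne_zero.2 hg0
  set c := Mf ^ l * Mg ^ (1 - l) with hc
  have hcne0 : c ≠ 0 :=
    mul_ne_zero (ENNReal.rpow_pos hMfpos hMf).ne' (ENNReal.rpow_pos hMgpos hMg).ne'
  have hcnetop : c ≠ ∞ :=
    ENNReal.mul_ne_top (ENNReal.rpow_ne_top_of_nonneg hl0.le hMf)
      (ENNReal.rpow_ne_top_of_nonneg h1l.le hMg)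
  set f' := fun s => f s * Mf⁻¹ with hf'def
  set g' := fun s => g s * Mg⁻¹ with hg'def
  set h' := fun s => h s * c⁻¹ with hh'def
  have hf'm : Measurable f' := hf.mul_const _
  have hg'm : Measurable g' := hg.mul_const _
  have hf'le : ∀ s, f' s ≤ 1 := fun s => by
    rw [hf'def]
    calc f s * Mf⁻¹ ≤ Mf * Mf⁻¹ := mul_le_mul_left (le_iSup f s) _
      _ = 1 := ENNReal.mul_inv_cancel hMfpos.ne' hMf
  have hg'le : ∀ s, g' s ≤ 1 := fun s => by
    rw [hg'def]
    calc g s * Mg⁻¹ ≤ Mg * Mg⁻¹ := mul_le_mul_left (le_iSup g s) _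
      _ = 1 := ENNReal.mul_inv_cancel hMgpos.ne' hMg
  have hsupf' : (⨆ s, f' s) = 1 := by
    rw [hf'def, ← ENNReal.iSup_mul]
    exact ENNReal.mul_inv_cancel hMfpos.ne' hMf
  have hsupg' : (⨆ s, g' s) = 1 := by
    rw [hg'def, ← ENNReal.iSup_mul]
    exact ENNReal.mul_inv_cancel hMgpos.ne' hMg
  have hyp' : ∀ s t, f' s ^ l * g' t ^ (1 - l) ≤ h' (l * s + (1 - l) * t) := by
    intro s t
    have e : f' s ^ l * g' t ^ (1 - l) = f s ^ l * g t ^ (1 - l) * c⁻¹ := by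
      rw [hf'def, hg'def]
      simp only []
      rw [ENNReal.mul_rpow_of_nonneg _ _ hl0.le, ENNReal.mul_rpow_of_nonneg _ _ h1l.le,
        ENNReal.inv_rpow, ENNReal.inv_rpow, hc,
        ENNReal.mul_inv (Or.inl (ENNReal.rpow_pos hMfpos hMf).ne')
          (Or.inl (ENNReal.rpow_ne_top_of_nonneg hl0.le hMf))]
      ring
    rw [e, hh'def]
    exact mul_le_mul_left (hyp s t) c⁻¹
  -- integrals of normalized functions
  have hIf' : (∫⁻ s, f' s) = (∫⁻ s, f s) * Mf⁻¹ :=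
    lintegral_mul_const' _ _ (ENNReal.inv_ne_top.2 hMfpos.ne')
  have hIg' : (∫⁻ s, g' s) = (∫⁻ s, g s) * Mg⁻¹ :=
    lintegral_mul_const' _ _ (ENNReal.inv_ne_top.2 hMgpos.ne')
  have hIh' : (∫⁻ s, h' s) = (∫⁻ s, h s) * c⁻¹ :=
    lintegral_mul_const' _ _ (ENNReal.inv_ne_top.2 hcne0)
  set X := ∫⁻ s, f' s with hX
  set Y := ∫⁻ s, g' s with hY
  have hXtop : X ≠ ∞ := by
    rw [hIf']; exact ENNReal.mul_ne_top hIf (ENNReal.inv_ne_top.2 hMfpos.ne')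
  have hYtop : Y ≠ ∞ := by
    rw [hIg']; exact ENNReal.mul_ne_top hIg (ENNReal.inv_ne_top.2 hMgpos.ne')
  -- truncated h
  set h'' := fun s => min (h' s) 1 with hh''def
  have hh''m : Measurable h'' := (hh.mul_const _).min measurable_const
  have hh''le : ∀ s, h'' s ≤ 1 := fun s => min_le_right _ _
  -- real-valued versions
  set F := fun s => (f' s).toReal with hF
  set G := fun s => (g' s).toReal with hG
  set H := fun s => (h'' s).toReal with hH
  have hf'top : ∀ s, f' s ≠ ∞ := fun s => ne_top_of_le_ne_top ENNReal.one_ne_top (hf'le s)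
  have hg'top : ∀ s, g' s ≠ ∞ := fun s => ne_top_of_le_ne_top ENNReal.one_ne_top (hg'le s)
  have hh''top : ∀ s, h'' s ≠ ∞ := fun s => ne_top_of_le_ne_top ENNReal.one_ne_top (hh''le s)
  have hFlt : ∀ t, 0 ≤ t → ∀ s, (t < F s ↔ ENNReal.ofReal t < f' s) := fun t ht s =>
    (ENNReal.ofReal_lt_iff_lt_toReal ht (hf'top s)).symm
  have hGlt : ∀ t, 0 ≤ t → ∀ s, (t < G s ↔ ENNReal.ofReal t < g' s) := fun t ht s =>
    (ENNReal.ofReal_lt_iff_lt_toReal ht (hg'top s)).symm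
  have hHlt : ∀ t, 0 ≤ t → ∀ s, (t < H s ↔ ENNReal.ofReal t < h'' s) := fun t ht s =>
    (ENNReal.ofReal_lt_iff_lt_toReal ht (hh''top s)).symm
  -- layer cake representations
  have LF : (∫⁻ s, f' s) = ∫⁻ t in Ioi (0:ℝ), volume {s | t < F s} := by
    calc (∫⁻ s, f' s) = ∫⁻ s, ENNReal.ofReal (F s) :=
          lintegral_congr fun s => (ENNReal.ofReal_toReal (hf'top s)).symm
      _ = ∫⁻ t in Ioi (0:ℝ), volume {s | t < F s} :=
          lintegral_eq_lintegral_meas_lt volume (ae_of_all _ fun s => ENNReal.toReal_nonneg)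
            hf'm.ennreal_toReal.aemeasurable
  have LG : (∫⁻ s, g' s) = ∫⁻ t in Ioi (0:ℝ), volume {s | t < G s} := by
    calc (∫⁻ s, g' s) = ∫⁻ s, ENNReal.ofReal (G s) :=
          lintegral_congr fun s => (ENNReal.ofReal_toReal (hg'top s)).symm
      _ = ∫⁻ t in Ioi (0:ℝ), volume {s | t < G s} :=
          lintegral_eq_lintegral_meas_lt volume (ae_of_all _ fun s => ENNReal.toReal_nonneg)
            hg'm.ennreal_toReal.aemeasurable
  have LH : (∫⁻ s, h'' s) = ∫⁻ t in Ioi (0:ℝ), volume {s | t < H s} := by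
    calc (∫⁻ s, h'' s) = ∫⁻ s, ENNReal.ofReal (H s) :=
          lintegral_congr fun s => (ENNReal.ofReal_toReal (hh''top s)).symm
      _ = ∫⁻ t in Ioi (0:ℝ), volume {s | t < H s} :=
          lintegral_eq_lintegral_meas_lt volume (ae_of_all _ fun s => ENNReal.toReal_nonneg)
            hh''m.ennreal_toReal.aemeasurable
  -- key superlevel-set inequality
  have key : ∀ t ∈ Ioo (0:ℝ) 1,
      ENNReal.ofReal l * volume {s | t < F s} + ENNReal.ofReal (1-l) * volume {s | t < G s}
        ≤ volume {s | t < H s} := by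
    intro t ht
    have hoft0 : (0:ℝ≥0∞) < ENNReal.ofReal t := ENNReal.ofReal_pos.2 ht.1
    have hoft1 : ENNReal.ofReal t < 1 := ENNReal.ofReal_lt_one.2 ht.2
    have hSt : MeasurableSet {s | t < F s} :=
      measurableSet_lt measurable_const hf'm.ennreal_toReal
    have hTt : MeasurableSet {s | t < G s} :=
      measurableSet_lt measurable_const hg'm.ennreal_toReal
    obtain ⟨s₀, hs₀⟩ : ∃ s, ENNReal.ofReal t < f' s := by
      apply lt_iSup_iff.1; rw [hsupf']; exact hoft1
    obtain ⟨u₀, hu₀⟩ : ∃ s, ENNReal.ofReal t < g' s := by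
      apply lt_iSup_iff.1; rw [hsupg']; exact hoft1
    have hStne : {s | t < F s}.Nonempty := ⟨s₀, (hFlt t ht.1.le s₀).2 hs₀⟩
    have hTtne : {s | t < G s}.Nonempty := ⟨u₀, (hGlt t ht.1.le u₀).2 hu₀⟩
    have hStfin : volume {s | t < F s} ≠ ∞ := by
      have hsub : {s | t < F s} ⊆ {s | ENNReal.ofReal t ≤ f' s} :=
        fun s hs => ((hFlt t ht.1.le s).1 hs).le
      have hle := (measure_mono hsub).trans
        (meas_ge_le_lintegral_div (μ := volume) hf'm.aemeasurable hoft0.ne' ENNReal.ofReal_ne_top)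
      exact ne_top_of_le_ne_top (ENNReal.div_lt_top hXtop hoft0.ne').ne hle
    have hTtfin : volume {s | t < G s} ≠ ∞ := by
      have hsub : {s | t < G s} ⊆ {s | ENNReal.ofReal t ≤ g' s} :=
        fun s hs => ((hGlt t ht.1.le s).1 hs).le
      have hle := (measure_mono hsub).trans
        (meas_ge_le_lintegral_div (μ := volume) hg'm.aemeasurable hoft0.ne' ENNReal.ofReal_ne_top)
      exact ne_top_of_le_ne_top (ENNReal.div_lt_top hYtop hoft0.ne').ne hle
    have hsub : l • {s | t < F s} + (1-l) • {s | t < G s} ⊆ {s | t < H s} := by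
      rintro x hx
      rcases Set.mem_add.1 hx with ⟨u, hu, v, hv, rfl⟩
      rcases Set.mem_smul_set.1 hu with ⟨s, hs, rfl⟩
      rcases Set.mem_smul_set.1 hv with ⟨tt, htt, rfl⟩
      have h1 : ENNReal.ofReal t < f' s := (hFlt t ht.1.le s).1 hs
      have h2 : ENNReal.ofReal t < g' tt := (hGlt t ht.1.le tt).1 htt
      set m := min (f' s) (g' tt) with hm
      have hm0 : m ≠ 0 := (hoft0.trans (lt_min h1 h2)).ne'
      have hmtop : m ≠ ∞ :=
        ne_top_of_le_ne_top ENNReal.one_ne_top ((min_le_left _ _).trans (hf'le s))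
      have hmm : m ≤ f' s ^ l * g' tt ^ (1 - l) := by
        calc m = m ^ l * m ^ (1 - l) := by
              rw [← ENNReal.rpow_add _ _ hm0 hmtop]; simp
          _ ≤ _ := mul_le_mul' (ENNReal.rpow_le_rpow (min_le_left _ _) hl0.le)
              (ENNReal.rpow_le_rpow (min_le_right _ _) h1l.le)
      have hlt : ENNReal.ofReal t < h'' (l * s + (1 - l) * tt) := by
        rw [hh''def]
        exact lt_min ((lt_min h1 h2).trans_le (hmm.trans (hyp' s tt))) hoft1
      have : l • s + (1 - l) • tt = l * s + (1 - l) * tt := by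
        simp [smul_eq_mul]
      rw [Set.mem_setOf_eq, this]
      exact (hHlt _ ht.1.le _).2 hlt
    calc ENNReal.ofReal l * volume {s | t < F s} + ENNReal.ofReal (1-l) * volume {s | t < G s}
        ≤ volume (l • {s | t < F s} + (1-l) • {s | t < G s}) :=
          onedim_meas hSt hTt hStne hTtne hStfin hTtfin hl0 hl1
      _ ≤ volume {s | t < H s} := measure_mono hsub
  -- tails vanish
  have tailF : ∀ t, 1 ≤ t → {s : ℝ | t < F s} = ∅ := by
    intro t ht
    refine Set.eq_empty_iff_forall_notMem.2 fun s hs => ?_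
    have hFs : F s ≤ 1 := by simpa using ENNReal.toReal_mono (by simp) (hf'le s)
    have : t < F s := hs
    linarith
  have tailG : ∀ t, 1 ≤ t → {s : ℝ | t < G s} = ∅ := by
    intro t ht
    refine Set.eq_empty_iff_forall_notMem.2 fun s hs => ?_
    have hGs : G s ≤ 1 := by simpa using ENNReal.toReal_mono (by simp) (hg'le s)
    have : t < G s := hs
    linarith
  have hsplitset : Ioi (0:ℝ) = Ioo 0 1 ∪ Ici 1 := by
    ext t
    constructor
    · intro ht
      rcases lt_or_ge t 1 with hlt' | hge
      · exact Or.inl ⟨ht, hlt'⟩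
      · exact Or.inr hge
    · rintro (⟨h1, _⟩ | h1)
      · exact h1
      · exact lt_of_lt_of_le zero_lt_one (Set.mem_Ici.1 h1)
  have hdisj : Disjoint (Ioo (0:ℝ) 1) (Ici 1) := by
    rw [Set.disjoint_left]
    rintro t ⟨_, h2⟩ h3
    exact absurd h3 (not_le.2 h2)
  have splitF : ∫⁻ t in Ioi (0:ℝ), volume {s | t < F s}
      = ∫⁻ t in Ioo (0:ℝ) 1, volume {s | t < F s} := by
    rw [hsplitset, lintegral_union measurableSet_Ici hdisj]
    have hzero : ∫⁻ t in Ici (1:ℝ), volume {s | t < F s} = 0 := by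
      rw [setLIntegral_congr_fun measurableSet_Ici
        (fun t (ht : t ∈ Ici (1:ℝ)) => show volume {s | t < F s} = volume (∅ : Set ℝ) by rw [tailF t ht])]
      simp
    rw [hzero, add_zero]
  have splitG : ∫⁻ t in Ioi (0:ℝ), volume {s | t < G s}
      = ∫⁻ t in Ioo (0:ℝ) 1, volume {s | t < G s} := by
    rw [hsplitset, lintegral_union measurableSet_Ici hdisj]
    have hzero : ∫⁻ t in Ici (1:ℝ), volume {s | t < G s} = 0 := by
      rw [setLIntegral_congr_fun measurableSet_Ici
        (fun t (ht : t ∈ Ici (1:ℝ)) => show volume {s | t < G s} = volume (∅ : Set ℝ) by rw [tailG t ht])]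
      simp
    rw [hzero, add_zero]
  have hmF : Measurable fun t : ℝ => volume {s | t < F s} :=
    Antitone.measurable fun t₁ t₂ h12 => measure_mono fun s hs => lt_of_le_of_lt h12 hs
  have hmG : Measurable fun t : ℝ => volume {s | t < G s} :=
    Antitone.measurable fun t₁ t₂ h12 => measure_mono fun s hs => lt_of_le_of_lt h12 hs
  have hmH : Measurable fun t : ℝ => volume {s | t < H s} :=
    Antitone.measurable fun t₁ t₂ h12 => measure_mono fun s hs => lt_of_le_of_lt h12 hs
  have main : ENNReal.ofReal l * X + ENNReal.ofReal (1-l) * Y ≤ (∫⁻ s, h s) * c⁻¹ := by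
    calc ENNReal.ofReal l * X + ENNReal.ofReal (1-l) * Y
        = ENNReal.ofReal l * (∫⁻ t in Ioo (0:ℝ) 1, volume {s | t < F s})
          + ENNReal.ofReal (1-l) * (∫⁻ t in Ioo (0:ℝ) 1, volume {s | t < G s}) := by
          rw [hX, hY, LF, LG, splitF, splitG]
      _ = ∫⁻ t in Ioo (0:ℝ) 1,
            (ENNReal.ofReal l * volume {s | t < F s}
              + ENNReal.ofReal (1-l) * volume {s | t < G s}) := by
          rw [lintegral_add_left (hmF.const_mul _),
            lintegral_const_mul' _ _ ENNReal.ofReal_ne_top,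
            lintegral_const_mul' _ _ ENNReal.ofReal_ne_top]
      _ ≤ ∫⁻ t in Ioo (0:ℝ) 1, volume {s | t < H s} :=
          setLIntegral_mono hmH key
      _ ≤ ∫⁻ t in Ioi (0:ℝ), volume {s | t < H s} :=
          lintegral_mono_set Ioo_subset_Ioi_self
      _ = ∫⁻ s, h'' s := LH.symm
      _ ≤ ∫⁻ s, h' s := lintegral_mono fun s => min_le_left _ _
      _ = (∫⁻ s, h s) * c⁻¹ := hIh'
  have am : X ^ l * Y ^ (1 - l) ≤ (∫⁻ s, h s) * c⁻¹ :=
    (engm hXtop hYtop hl0 hl1).trans main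
  have hXf : (∫⁻ s, f s) = X * Mf := by
    rw [hIf', mul_assoc, ENNReal.inv_mul_cancel hMfpos.ne' hMf, mul_one]
  have hYg : (∫⁻ s, g s) = Y * Mg := by
    rw [hIg', mul_assoc, ENNReal.inv_mul_cancel hMgpos.ne' hMg, mul_one]
  calc (∫⁻ s, f s) ^ l * (∫⁻ s, g s) ^ (1 - l)
      = (X * Mf) ^ l * (Y * Mg) ^ (1 - l) := by rw [hXf, hYg]
    _ = X ^ l * Y ^ (1 - l) * c := by
        rw [ENNReal.mul_rpow_of_nonneg _ _ hl0.le, ENNReal.mul_rpow_of_nonneg _ _ h1l.le, hc]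
        ring
    _ ≤ (∫⁻ s, h s) * c⁻¹ * c := mul_le_mul_left am _
    _ = ∫⁻ s, h s := by
        rw [mul_assoc, ENNReal.inv_mul_cancel hcne0 hcnetop, mul_one]

/-- Multiplicative Brunn–Minkowski inequality for compact sets in `Fin n → ℝ`. -/
lemma bm_mul : ∀ (n : ℕ) (A B : Set (Fin n → ℝ)), IsCompact A → IsCompact B →
    ∀ {l : ℝ}, 0 < l → l < 1 →
    volume A ^ l * volume B ^ (1 - l) ≤ volume (l • A + (1 - l) • B) := by
  intro n
  induction n with
  | zero =>
    intro A B hA hB l hl0 hl1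
    have h1l : (0:ℝ) < 1 - l := by linarith
    rcases A.eq_empty_or_nonempty with rfl | hAne
    · simp [ENNReal.zero_rpow_of_pos hl0]
    rcases B.eq_empty_or_nonempty with rfl | hBne
    · simp [ENNReal.zero_rpow_of_pos h1l]
    have hone : ∀ S : Set (Fin 0 → ℝ), S.Nonempty → volume S = 1 := by
      intro S hS
      have : S = univ := Subsingleton.eq_univ_of_nonempty hS
      rw [this]
      simp [MeasureTheory.volume_pi, Measure.pi_univ]
    rw [hone A hAne, hone B hBne, hone _ ((hAne.smul_set).add (hBne.smul_set))]
    simp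
  | succ n ih =>
    intro A B hA hB l hl0 hl1
    have h1l : (0:ℝ) < 1 - l := by linarith
    set ψ := MeasurableEquiv.piFinSuccAbove (fun _ : Fin (n+1) => ℝ) 0 with hψ
    have ψadd : ∀ x y, ψ (x + y) = ψ x + ψ y := fun x y => rfl
    have ψsmul : ∀ (c : ℝ) x, ψ (c • x) = c • ψ x := fun c x => rfl
    have ψcont : Continuous ψ := by
      have : ⇑ψ = fun x => (x 0, fun j : Fin n => x ((0:Fin (n+1)).succAbove j)) := by
        funext x; rfl
      rw [this]; fun_prop
    have ψmp : MeasurePreserving ψ :=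
      volume_preserving_piFinSuccAbove (fun _ : Fin (n+1) => ℝ) 0
    have hvol : ∀ S : Set (Fin (n+1) → ℝ), MeasurableSet S → volume (ψ '' S) = volume S := by
      intro S hS
      rw [MeasurableEquiv.image_eq_preimage_symm]
      exact (MeasurePreserving.symm ψ ψmp).measure_preimage hS.nullMeasurableSet
    set A' := ψ '' A with hA'
    set B' := ψ '' B with hB'
    have hA'c : IsCompact A' := hA.image ψcont
    have hB'c : IsCompact B' := hB.image ψcont
    have hsum : ψ '' (l • A + (1-l) • B) = l • A' + (1-l) • B' := by
      rw [image_add_of_map_add ψ ψadd, image_smul_of_map_smul ψ ψsmul,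
        image_smul_of_map_smul ψ ψsmul]
    have hsumc : IsCompact (l • A' + (1-l) • B') := (hA'c.smul l).add (hB'c.smul (1-l))
    -- slice functions
    set f := fun u : ℝ => volume (Prod.mk u ⁻¹' A') with hfdef
    set g := fun u : ℝ => volume (Prod.mk u ⁻¹' B') with hgdef
    set h := fun u : ℝ => volume (Prod.mk u ⁻¹' (l • A' + (1-l) • B')) with hhdef
    have hfm : Measurable f := measurable_measure_prodMk_left hA'c.isClosed.measurableSet
    have hgm : Measurable g := measurable_measure_prodMk_left hB'c.isClosed.measurableSet
    have hhm : Measurable h := measurable_measure_prodMk_left hsumc.isClosed.measurableSet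
    have hslice : ∀ (S : Set (ℝ × (Fin n → ℝ))), IsCompact S → ∀ u : ℝ,
        IsCompact (Prod.mk u ⁻¹' S) := by
      intro S hS u
      refine IsCompact.of_isClosed_subset (hS.image continuous_snd)
        (hS.isClosed.preimage (by fun_prop)) ?_
      intro x hx; exact ⟨(u, x), hx, rfl⟩
    have hslicesub : ∀ (S : Set (ℝ × (Fin n → ℝ))) (u : ℝ),
        Prod.mk u ⁻¹' S ⊆ Prod.snd '' S := by
      intro S u x hx; exact ⟨(u, x), hx, rfl⟩
    have hprodvol : ∀ (S : Set (ℝ × (Fin n → ℝ))), MeasurableSet S →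
        volume S = ∫⁻ u : ℝ, volume (Prod.mk u ⁻¹' S) := by
      intro S hS
      rw [MeasureTheory.Measure.volume_eq_prod _ _, Measure.prod_apply hS]
    -- supremum bounds
    have hsupf : (⨆ u, f u) ≠ ∞ := by
      refine ne_top_of_le_ne_top (IsCompact.measure_ne_top (μ := volume) (hA'c.image continuous_snd)) ?_
      exact iSup_le fun u => measure_mono (hslicesub A' u)
    have hsupg : (⨆ u, g u) ≠ ∞ := by
      refine ne_top_of_le_ne_top (IsCompact.measure_ne_top (μ := volume) (hB'c.image continuous_snd)) ?_
      exact iSup_le fun u => measure_mono (hslicesub B' u)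
    have hIf : (∫⁻ u, f u) ≠ ∞ := by
      rw [← hprodvol A' hA'c.isClosed.measurableSet]
      exact hA'c.measure_ne_top
    have hIg : (∫⁻ u, g u) ≠ ∞ := by
      rw [← hprodvol B' hB'c.isClosed.measurableSet]
      exact hB'c.measure_ne_top
    -- hypothesis via induction
    have hyp : ∀ s t, f s ^ l * g t ^ (1 - l) ≤ h (l * s + (1 - l) * t) := by
      intro s t
      have hincl : l • (Prod.mk s ⁻¹' A') + (1-l) • (Prod.mk t ⁻¹' B')
          ⊆ Prod.mk (l * s + (1 - l) * t) ⁻¹' (l • A' + (1-l) • B') := by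
        rintro x hx
        rcases Set.mem_add.1 hx with ⟨u, hu, v, hv, rfl⟩
        rcases Set.mem_smul_set.1 hu with ⟨a, ha, rfl⟩
        rcases Set.mem_smul_set.1 hv with ⟨b, hb, rfl⟩
        show (l * s + (1 - l) * t, l • a + (1 - l) • b) ∈ l • A' + (1-l) • B'
        refine Set.mem_add.2 ⟨l • ((s, a) : ℝ × (Fin n → ℝ)), ?_, (1-l) • ((t, b) : ℝ × (Fin n → ℝ)), ?_, ?_⟩
        · exact Set.smul_mem_smul_set ha
        · exact Set.smul_mem_smul_set hb
        · rfl
      calc f s ^ l * g t ^ (1 - l)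
          ≤ volume (l • (Prod.mk s ⁻¹' A') + (1-l) • (Prod.mk t ⁻¹' B')) :=
            ih _ _ (hslice A' hA'c s) (hslice B' hB'c t) hl0 hl1
        _ ≤ h (l * s + (1 - l) * t) := measure_mono hincl
    have main := dim1 hfm hgm hhm hl0 hl1 hsupf hsupg hIf hIg hyp
    calc volume A ^ l * volume B ^ (1 - l)
        = volume A' ^ l * volume B' ^ (1-l) := by
          rw [hvol A hA.isClosed.measurableSet, hvol B hB.isClosed.measurableSet]
      _ = (∫⁻ u, f u) ^ l * (∫⁻ u, g u) ^ (1-l) := by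
          rw [← hprodvol A' hA'c.isClosed.measurableSet, ← hprodvol B' hB'c.isClosed.measurableSet]
      _ ≤ ∫⁻ u, h u := main
      _ = volume (l • A' + (1-l) • B') := (hprodvol _ hsumc.isClosed.measurableSet).symm
      _ = volume (l • A + (1-l) • B) := by
          rw [← hsum, hvol _ (((hA.smul l).add (hB.smul (1-l))).isClosed.measurableSet)]

/-- Multiplicative Brunn–Minkowski inequality in Euclidean space. -/
lemma bm_mul_euc (n : ℕ) (A B : Set (EuclideanSpace ℝ (Fin n))) (hA : IsCompact A)
    (hB : IsCompact B) {l : ℝ} (hl0 : 0 < l) (hl1 : l < 1) :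
    volume A ^ l * volume B ^ (1 - l) ≤ volume (l • A + (1 - l) • B) := by
  set φ := (MeasurableEquiv.toLp 2 (Fin n → ℝ)).symm with hφ
  have φadd : ∀ x y, φ (x + y) = φ x + φ y := fun x y => rfl
  have φsmul : ∀ (c : ℝ) x, φ (c • x) = c • φ x := fun c x => rfl
  have φcont : Continuous φ := by
    have : ⇑φ = ⇑(PiLp.continuousLinearEquiv 2 ℝ (fun _ : Fin n => ℝ)) := rfl
    rw [this]; exact (PiLp.continuousLinearEquiv 2 ℝ _).continuous
  have φmp : MeasurePreserving φ := EuclideanSpace.volume_preserving_symm_measurableEquiv_toLp (Fin n)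
  have hvol : ∀ S : Set (EuclideanSpace ℝ (Fin n)), MeasurableSet S →
      volume (φ '' S) = volume S := by
    intro S hS
    rw [MeasurableEquiv.image_eq_preimage_symm]
    exact (MeasurePreserving.symm φ φmp).measure_preimage hS.nullMeasurableSet
  have hsum : φ '' (l • A + (1-l) • B) = l • (φ '' A) + (1-l) • (φ '' B) := by
    rw [image_add_of_map_add φ φadd, image_smul_of_map_smul φ φsmul,
      image_smul_of_map_smul φ φsmul]
  calc volume A ^ l * volume B ^ (1 - l)
      = volume (φ '' A) ^ l * volume (φ '' B) ^ (1-l) := by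
        rw [hvol A hA.isClosed.measurableSet, hvol B hB.isClosed.measurableSet]
    _ ≤ volume (l • (φ '' A) + (1-l) • (φ '' B)) :=
        bm_mul n _ _ (hA.image φcont) (hB.image φcont) hl0 hl1
    _ = volume (l • A + (1-l) • B) := by
        rw [← hsum, hvol _ (((hA.smul l).add (hB.smul (1-l))).isClosed.measurableSet)]

set_option maxHeartbeats 1000000 in
/-- Additive Brunn–Minkowski inequality in Euclidean space. -/
lemma bm_add_euc (n : ℕ) (hn : n ≠ 0) (A B : Set (EuclideanSpace ℝ (Fin n)))
    (hA : IsCompact A) (hB : IsCompact B) (hAne : A.Nonempty) (hBne : B.Nonempty)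
    {l : ℝ} (hl0 : 0 < l) (hl1 : l < 1) :
    (ENNReal.ofReal l * volume A ^ ((n:ℝ)⁻¹) + ENNReal.ofReal (1-l) * volume B ^ ((n:ℝ)⁻¹)) ^ n
      ≤ volume (l • A + (1 - l) • B) := by
  have h1l : (0:ℝ) < 1 - l := by linarith
  have hnR : (0:ℝ) < n := by exact_mod_cast Nat.pos_of_ne_zero hn
  have hninv : (0:ℝ) < (n:ℝ)⁻¹ := inv_pos.2 hnR
  have hvol_smul : ∀ (r : ℝ), 0 ≤ r → ∀ S : Set (EuclideanSpace ℝ (Fin n)),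
      volume (r • S) = ENNReal.ofReal (r ^ n) * volume S := by
    intro r hr S
    have := Measure.addHaar_smul_of_nonneg (volume : Measure (EuclideanSpace ℝ (Fin n))) hr S
    simpa using this
  have hpow : ∀ x : ℝ≥0∞, (x ^ ((n:ℝ)⁻¹)) ^ (n:ℕ) = x := fun x => by
    rw [← ENNReal.rpow_natCast, ← ENNReal.rpow_mul,
      inv_mul_cancel₀ (by exact_mod_cast hn : (n:ℝ) ≠ 0), ENNReal.rpow_one]
  by_cases hA0 : volume A = 0
  · by_cases hB0 : volume B = 0
    · rw [hA0, hB0, ENNReal.zero_rpow_of_pos hninv]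
      simp only [mul_zero, add_zero, zero_add]
      rw [zero_pow hn]
      exact zero_le
    · obtain ⟨a₀, ha₀⟩ := hAne
      have hsub : {l • a₀} + (1-l) • B ⊆ l • A + (1-l) • B :=
        Set.add_subset_add (by simpa using Set.smul_mem_smul_set (a := l) ha₀) subset_rfl
      have htrans : volume ({l • a₀} + (1-l) • B) = volume ((1-l) • B) := by
        rw [Set.singleton_add, Set.image_add_left, measure_preimage_add]
      have hlb : ENNReal.ofReal ((1-l) ^ n) * volume B ≤ volume (l • A + (1-l) • B) := by
        rw [← hvol_smul (1-l) h1l.le B, ← htrans]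
        exact measure_mono hsub
      rw [hA0, ENNReal.zero_rpow_of_pos hninv, mul_zero, zero_add, mul_pow, hpow,
        ← ENNReal.ofReal_pow h1l.le]
      exact hlb
  · by_cases hB0 : volume B = 0
    · obtain ⟨b₀, hb₀⟩ := hBne
      have hsub : l • A + {(1-l) • b₀} ⊆ l • A + (1-l) • B :=
        Set.add_subset_add subset_rfl (by simpa using Set.smul_mem_smul_set (a := 1-l) hb₀)
      have htrans : volume (l • A + {(1-l) • b₀}) = volume (l • A) := by
        rw [Set.add_singleton, Set.image_add_right, measure_preimage_add_right]
      have hlb : ENNReal.ofReal (l ^ n) * volume A ≤ volume (l • A + (1-l) • B) := by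
        rw [← hvol_smul l hl0.le A, ← htrans]
        exact measure_mono hsub
      rw [hB0, ENNReal.zero_rpow_of_pos hninv, mul_zero, add_zero, mul_pow, hpow,
        ← ENNReal.ofReal_pow hl0.le]
      exact hlb
    · -- main case
      set α := (volume A).toReal ^ ((n:ℝ)⁻¹) with hα
      set β := (volume B).toReal ^ ((n:ℝ)⁻¹) with hβ
      have hvApos : 0 < (volume A).toReal :=
        ENNReal.toReal_pos hA0 hA.measure_ne_top
      have hvBpos : 0 < (volume B).toReal :=
        ENNReal.toReal_pos hB0 hB.measure_ne_top
      have hαpos : 0 < α := Real.rpow_pos_of_pos hvApos _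
      have hβpos : 0 < β := Real.rpow_pos_of_pos hvBpos _
      have hαpow : α ^ n = (volume A).toReal := by
        rw [hα, ← Real.rpow_natCast (_ ^ _) n, ← Real.rpow_mul hvApos.le,
          inv_mul_cancel₀ (by exact_mod_cast hn : (n:ℝ) ≠ 0), Real.rpow_one]
      have hβpow : β ^ n = (volume B).toReal := by
        rw [hβ, ← Real.rpow_natCast (_ ^ _) n, ← Real.rpow_mul hvBpos.le,
          inv_mul_cancel₀ (by exact_mod_cast hn : (n:ℝ) ≠ 0), Real.rpow_one]
      have hαA : volume A ^ ((n:ℝ)⁻¹) = ENNReal.ofReal α := by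
        rw [← ENNReal.ofReal_toReal hA.measure_ne_top,
          ENNReal.ofReal_rpow_of_nonneg ENNReal.toReal_nonneg hninv.le]
      have hβB : volume B ^ ((n:ℝ)⁻¹) = ENNReal.ofReal β := by
        rw [← ENNReal.ofReal_toReal hB.measure_ne_top,
          ENNReal.ofReal_rpow_of_nonneg ENNReal.toReal_nonneg hninv.le]
      set D := l * α + (1-l) * β with hD
      have hDpos : 0 < D := by positivity
      set l' := l * α / D with hl'
      have hl'0 : 0 < l' := by positivity
      have hl'1 : l' < 1 := by
        rw [hl', div_lt_one hDpos, hD]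
        nlinarith [mul_pos h1l hβpos]
      have h1l' : 1 - l' = (1-l) * β / D := by
        rw [hl']
        field_simp
        ring
      set A' := α⁻¹ • A with hA'
      set B' := β⁻¹ • B with hB'
      have hvA' : volume A' = 1 := by
        rw [hA', hvol_smul α⁻¹ (by positivity) A,
          show volume A = ENNReal.ofReal (α ^ n) by
            rw [hαpow, ENNReal.ofReal_toReal hA.measure_ne_top],
          ← ENNReal.ofReal_mul (by positivity), ← mul_pow, inv_mul_cancel₀ hαpos.ne']
        simp
      have hvB' : volume B' = 1 := by
        rw [hB', hvol_smul β⁻¹ (by positivity) B,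
          show volume B = ENNReal.ofReal (β ^ n) by
            rw [hβpow, ENNReal.ofReal_toReal hB.measure_ne_top],
          ← ENNReal.ofReal_mul (by positivity), ← mul_pow, inv_mul_cancel₀ hβpos.ne']
        simp
      have hbm := bm_mul_euc n A' B' (hA.smul _) (hB.smul _) hl'0 hl'1
      rw [hvA', hvB', ENNReal.one_rpow, ENNReal.one_rpow, one_mul] at hbm
      have hsmul1 : l' • A' = (l / D) • A := by
        rw [hA', smul_smul, hl']
        congr 1
        field_simp
      have hsmul2 : (1 - l') • B' = ((1-l) / D) • B := by
        rw [hB', smul_smul, h1l']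
        congr 1
        field_simp
      have hrescale : l • A + (1-l) • B = D • (l' • A' + (1 - l') • B') := by
        rw [hsmul1, hsmul2, smul_add, smul_smul, smul_smul,
          mul_div_cancel₀ _ hDpos.ne', mul_div_cancel₀ _ hDpos.ne']
      calc (ENNReal.ofReal l * volume A ^ ((n:ℝ)⁻¹)
            + ENNReal.ofReal (1-l) * volume B ^ ((n:ℝ)⁻¹)) ^ n
          = ENNReal.ofReal (D ^ n) := by
            rw [hαA, hβB, ← ENNReal.ofReal_mul hl0.le, ← ENNReal.ofReal_mul h1l.le,
              ← ENNReal.ofReal_add (by positivity) (by positivity), ← hD,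
              ← ENNReal.ofReal_pow hDpos.le]
        _ ≤ ENNReal.ofReal (D ^ n) * volume (l' • A' + (1 - l') • B') := by
            nth_rewrite 1 [← mul_one (ENNReal.ofReal (D ^ n))]
            exact mul_le_mul_right hbm _
        _ = volume (l • A + (1-l) • B) := by
            rw [hrescale, hvol_smul D hDpos.le]

/-- The `θ`-convolution body of `K` and `L`. -/
noncomputable def convBody (n : ℕ) (θ : ℝ) (K L : Set (EuclideanSpace ℝ (Fin n))) :
    Set (EuclideanSpace ℝ (Fin n)) :=
  {x ∈ K + L |
    ENNReal.ofReal θ * (⨆ z : EuclideanSpace ℝ (Fin n), volume (K ∩ ({z} - L))) ≤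
      volume (K ∩ ({x} - L))}

theorem convBody_monotone_in_theta (n : ℕ) (K L : Set (EuclideanSpace ℝ (Fin n)))
    (hK : IsCompact K) (hKc : Convex ℝ K) (hKi : (interior K).Nonempty)
    (hL : IsCompact L) (hLc : Convex ℝ L) (hLi : (interior L).Nonempty)
    (hM : (⨆ z : EuclideanSpace ℝ (Fin n), volume (K ∩ ({z} - L))) = volume (K ∩ (-L)))
    (θ₀ θ : ℝ) (h₀ : 0 ≤ θ₀) (h₀θ : θ₀ ≤ θ) (hθ : θ < 1) :
    (1 - θ ^ ((n : ℝ)⁻¹)) • convBody n θ₀ K L ⊆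
      (1 - θ₀ ^ ((n : ℝ)⁻¹)) • convBody n θ K L := by
  have hθ0 : (0:ℝ) ≤ θ := h₀.trans h₀θ
  set M := ⨆ z : EuclideanSpace ℝ (Fin n), volume (K ∩ ({z} - L)) with hMdef
  -- positivity of the maximal section
  have hMpos : 0 < volume (K ∩ (-L)) := by
    obtain ⟨k, hk⟩ := hKi
    obtain ⟨m, hm⟩ := hLi
    set z₀ := k + m with hz₀
    have hUopen : IsOpen (interior K ∩ ((fun x => z₀ - x) ⁻¹' interior L)) :=
      isOpen_interior.inter (isOpen_interior.preimage (by fun_prop))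
    have hUne : k ∈ interior K ∩ ((fun x => z₀ - x) ⁻¹' interior L) := by
      refine ⟨hk, ?_⟩
      simp [hz₀, hm]
    have hUsub : interior K ∩ ((fun x => z₀ - x) ⁻¹' interior L) ⊆ K ∩ ({z₀} - L) := by
      rintro x ⟨hx1, hx2⟩
      refine ⟨interior_subset hx1, ?_⟩
      refine Set.mem_sub.2 ⟨z₀, rfl, z₀ - x, interior_subset hx2, by abel⟩
    have hpos : 0 < volume (K ∩ ({z₀} - L)) :=
      lt_of_lt_of_le (hUopen.measure_pos volume ⟨k, hUne⟩) (measure_mono hUsub)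
    have : volume (K ∩ ({z₀} - L)) ≤ M :=
      le_iSup (fun z => volume (K ∩ ({z} - L))) z₀
    rw [hM] at this
    exact lt_of_lt_of_le hpos this
  have hKL0 : (0 : EuclideanSpace ℝ (Fin n)) ∈ K + L := by
    have hne : (K ∩ (-L)).Nonempty := nonempty_of_measure_ne_zero hMpos.ne'
    obtain ⟨b, hbK, hbL⟩ := hne
    exact Set.mem_add.2 ⟨b, hbK, -b, Set.mem_neg.1 (by simpa using hbL), by abel⟩
  have hMtop : M ≠ ∞ := by
    rw [hM]
    exact ne_top_of_le_ne_top (IsCompact.measure_ne_top (μ := volume) hK)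
      (measure_mono inter_subset_left)
  -- the zero-dimensional case
  rcases Nat.eq_zero_or_pos n with rfl | hn
  · have hz : ((0:ℕ):ℝ)⁻¹ = (0:ℝ) := by norm_num
    rw [hz, Real.rpow_zero, Real.rpow_zero, sub_self]
    rcases (convBody 0 θ₀ K L).eq_empty_or_nonempty with he | hne
    · rw [he, Set.smul_set_empty]
      exact Set.empty_subset _
    · have h0mem : (0 : EuclideanSpace ℝ (Fin 0)) ∈ convBody 0 θ K L := by
        refine ⟨hKL0, ?_⟩
        have hsub : ({(0 : EuclideanSpace ℝ (Fin 0))} : Set _) - L = -L := by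
          rw [Set.singleton_zero, zero_sub]
        calc ENNReal.ofReal θ * M ≤ 1 * M :=
              mul_le_mul_left (ENNReal.ofReal_le_one.2 hθ.le) M
          _ = volume (K ∩ ({(0 : EuclideanSpace ℝ (Fin 0))} - L)) := by
              rw [one_mul, hM, hsub]
      intro y hy
      rcases Set.mem_smul_set.1 hy with ⟨x, hx, rfl⟩
      rw [zero_smul]
      exact Set.mem_smul_set.2 ⟨0, h0mem, by rw [zero_smul]⟩
  -- the positive-dimensional case
  rcases eq_or_lt_of_le h₀θ with rfl | hlt
  · exact subset_rfl
  have hnR : (0:ℝ) < n := by exact_mod_cast hn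
  have hninv : (0:ℝ) < (n:ℝ)⁻¹ := inv_pos.2 hnR
  set a₀ := θ₀ ^ ((n:ℝ)⁻¹) with ha₀
  set a := θ ^ ((n:ℝ)⁻¹) with ha
  have ha₀0 : 0 ≤ a₀ := Real.rpow_nonneg h₀ _
  have ha₀a : a₀ < a := Real.rpow_lt_rpow h₀ hlt hninv
  have ha1 : a < 1 := Real.rpow_lt_one hθ0 hθ hninv
  have h1a : (0:ℝ) < 1 - a := by linarith
  have h1a₀ : (0:ℝ) < 1 - a₀ := by linarith
  set l := (1 - a) / (1 - a₀) with hl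
  have hl0 : 0 < l := div_pos h1a h1a₀
  have hl1 : l < 1 := (div_lt_one h1a₀).2 (by linarith)
  have h1l : (0:ℝ) < 1 - l := by linarith
  have hkey : (1 - a₀) * l = 1 - a := by
    rw [hl]; field_simp
  have harith : l * a₀ + (1 - l) = a := by
    rw [hl]; field_simp; ring
  have hpow : ∀ x : ℝ≥0∞, (x ^ ((n:ℝ)⁻¹)) ^ (n:ℕ) = x := fun x => by
    rw [← ENNReal.rpow_natCast, ← ENNReal.rpow_mul,
      inv_mul_cancel₀ hnR.ne', ENNReal.rpow_one]
  intro y hy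
  rcases Set.mem_smul_set.1 hy with ⟨x, hx, rfl⟩
  have hxKL : x ∈ K + L := hx.1
  have hxvol : ENNReal.ofReal θ₀ * M ≤ volume (K ∩ ({x} - L)) := hx.2
  refine Set.mem_smul_set.2 ⟨l • x, ⟨?_, ?_⟩, by rw [smul_smul, hkey]⟩
  · -- l • x ∈ K + L
    have hmem := (hKc.add hLc) hxKL hKL0 hl0.le h1l.le (by ring)
    simpa using hmem
  · -- volume inequality
    set A := K ∩ ({x} - L) with hA
    set B := K ∩ (-L) with hB
    have hxL_closed : IsClosed ({x} - L) := by
      have : ({x} - L : Set _) = (fun p => x - p) ⁻¹' L := by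
        ext p
        constructor
        · rintro hp
          rcases Set.mem_sub.1 hp with ⟨x', hx', m, hm, hpe⟩
          rcases Set.mem_singleton_iff.1 hx' with rfl
          have : x' - (x' - m) = m := by abel
          simpa [Set.mem_preimage, ← hpe, this] using hm
        · intro hp
          exact Set.mem_sub.2 ⟨x, rfl, x - p, hp, by abel⟩
      rw [this]
      exact hL.isClosed.preimage (by fun_prop)
    have hAc : IsCompact A := hK.inter_right hxL_closed
    have hBc : IsCompact B := hK.inter_right hL.isClosed.neg
    have hAne : A.Nonempty := by
      rcases Set.mem_add.1 hxKL with ⟨k, hk, m, hm, hkm⟩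
      exact ⟨k, hk, Set.mem_sub.2 ⟨x, rfl, m, hm, by rw [← hkm]; abel⟩⟩
    have hBne : B.Nonempty := nonempty_of_measure_ne_zero hMpos.ne'
    have hincl : l • A + (1 - l) • B ⊆ K ∩ ({l • x} - L) := by
      rintro w hw
      rcases Set.mem_add.1 hw with ⟨u, hu, v, hv, rfl⟩
      rcases Set.mem_smul_set.1 hu with ⟨p, hp, rfl⟩
      rcases Set.mem_smul_set.1 hv with ⟨q, hq, rfl⟩
      rcases Set.mem_sub.1 hp.2 with ⟨x', hx', m₁, hm₁, hpe⟩
      rcases Set.mem_singleton_iff.1 hx' with rfl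
      have hqL : -q ∈ L := Set.mem_neg.1 (by simpa using hq.2)
      refine ⟨hKc hp.1 hq.1 hl0.le h1l.le (by ring), ?_⟩
      refine Set.mem_sub.2 ⟨l • x', rfl, l • m₁ + (1-l) • (-q),
        hLc hm₁ hqL hl0.le h1l.le (by ring), ?_⟩
      rw [← hpe]
      module
    have hbm := bm_add_euc n hn.ne' A B hAc hBc hAne hBne hl0 hl1
    have hA14 : ENNReal.ofReal a₀ * M ^ ((n:ℝ)⁻¹) ≤ volume A ^ ((n:ℝ)⁻¹) := by
      have := ENNReal.rpow_le_rpow hxvol hninv.le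
      rwa [ENNReal.mul_rpow_of_nonneg _ _ hninv.le,
        ENNReal.ofReal_rpow_of_nonneg h₀ hninv.le] at this
    have hB14 : volume B ^ ((n:ℝ)⁻¹) = M ^ ((n:ℝ)⁻¹) := by rw [hB, ← hM]
    have hapow : a ^ (n:ℕ) = θ := by
      rw [ha, ← Real.rpow_natCast (θ ^ ((n:ℝ)⁻¹)) n, ← Real.rpow_mul hθ0,
        inv_mul_cancel₀ hnR.ne', Real.rpow_one]
    calc ENNReal.ofReal θ * M
        = (ENNReal.ofReal a * M ^ ((n:ℝ)⁻¹)) ^ (n:ℕ) := by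
          rw [mul_pow, hpow M, ← ENNReal.ofReal_pow (Real.rpow_nonneg hθ0 _), hapow]
      _ ≤ (ENNReal.ofReal l * volume A ^ ((n:ℝ)⁻¹)
            + ENNReal.ofReal (1-l) * volume B ^ ((n:ℝ)⁻¹)) ^ (n:ℕ) := by
          refine pow_le_pow_left' ?_ n
          have hsplit : ENNReal.ofReal a * M ^ ((n:ℝ)⁻¹)
              = ENNReal.ofReal l * (ENNReal.ofReal a₀ * M ^ ((n:ℝ)⁻¹))
                + ENNReal.ofReal (1-l) * M ^ ((n:ℝ)⁻¹) := by
            rw [← mul_assoc, ← ENNReal.ofReal_mul hl0.le, ← add_mul,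
              ← ENNReal.ofReal_add (by positivity) h1l.le, harith]
          rw [hsplit, hB14]
          gcongr
      _ ≤ volume (l • A + (1 - l) • B) := hbm
      _ ≤ volume (K ∩ ({l • x} - L)) := measure_mono hincl
end

section
/- Let K, L be convex bodies in ℝⁿ with M(K,L) = |K ∩ (-L)|. For every θ ∈ [0,1], θ^{1/n}(K +_1 L) + (1 - θ^{1/n})(K + L) ⊆ K +_θ L. -/
open MeasureTheory Set
open scoped Pointwise

theorem convBody_RogersShephard_inclusion (n : ℕ) (K L : Set (EuclideanSpace ℝ (Fin n)))
    (hK : IsCompact K) (hKc : Convex ℝ K) (hKi : (interior K).Nonempty)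
    (hL : IsCompact L) (hLc : Convex ℝ L) (hLi : (interior L).Nonempty)
    (hM : (⨆ z : EuclideanSpace ℝ (Fin n), volume (K ∩ ({z} - L))) = volume (K ∩ (-L)))
    (θ : ℝ) (hθ : θ ∈ Set.Icc (0 : ℝ) 1) :
    (θ ^ ((n : ℝ)⁻¹)) • convBody n 1 K L + (1 - θ ^ ((n : ℝ)⁻¹)) • (K + L) ⊆
      convBody n θ K L := by
  obtain ⟨hθ0, hθ1⟩ := hθ
  set l : ℝ := θ ^ ((n : ℝ)⁻¹) with hl
  have hl0 : 0 ≤ l := Real.rpow_nonneg hθ0 _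
  have hl1 : l ≤ 1 := Real.rpow_le_one hθ0 hθ1 (by positivity)
  have hθln : θ ≤ l ^ n := by
    rcases Nat.eq_zero_or_pos n with h | h
    · subst h; simpa using hθ1
    · have : l ^ n = θ := by
        rw [hl, ← Real.rpow_natCast (θ ^ ((n : ℝ)⁻¹)) n, ← Real.rpow_mul hθ0,
          inv_mul_cancel₀ (Nat.cast_ne_zero.mpr h.ne'), Real.rpow_one]
      exact this.ge
  rintro p ⟨-, ⟨x, hx, rfl⟩, -, ⟨y, hy, rfl⟩, rfl⟩
  obtain ⟨hxKL, hxS⟩ := hx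
  have hxS' : (⨆ z : EuclideanSpace ℝ (Fin n), volume (K ∩ ({z} - L)))
      ≤ volume (K ∩ ({x} - L)) := by simpa using hxS
  obtain ⟨k, hk, m, hm, rfl⟩ := hy
  set A : Set (EuclideanSpace ℝ (Fin n)) := K ∩ ({x} - L) with hA
  set p : EuclideanSpace ℝ (Fin n) := l • x + (1 - l) • (k + m) with hp
  have H : ((1 - l) • k) +ᵥ (l • A) ⊆ K ∩ ({p} - L) := by
    rintro - ⟨-, ⟨a, ha, rfl⟩, rfl⟩
    obtain ⟨haK, haL⟩ := ha
    obtain ⟨b, hb, u, hu, rfl⟩ := haL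
    rw [Set.mem_singleton_iff] at hb
    subst hb
    constructor
    · have h1 := hKc haK hk hl0 (by linarith : (0:ℝ) ≤ 1 - l) (by ring : l + (1 - l) = 1)
      simp only [vadd_eq_add]; rw [add_comm]
      exact h1
    · refine ⟨p, rfl, l • u + (1 - l) • m, hLc hu hm hl0 (by linarith : (0:ℝ) ≤ 1 - l) (by ring : l + (1 - l) = 1), ?_⟩
      simp only [vadd_eq_add, hp]
      module
  refine ⟨(hKc.add hLc) hxKL ⟨k, hk, m, hm, rfl⟩ hl0 (by linarith : (0:ℝ) ≤ 1 - l) (by ring : l + (1 - l) = 1), ?_⟩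
  have hv1 : volume (((1 - l) • k) +ᵥ (l • A)) = volume (l • A) := measure_vadd _ _ _
  have hv2 : volume (l • A) = ENNReal.ofReal |l ^ n| * volume A := by
    rw [Measure.addHaar_smul, finrank_euclideanSpace_fin]
  calc ENNReal.ofReal θ * (⨆ z : EuclideanSpace ℝ (Fin n), volume (K ∩ ({z} - L)))
      ≤ ENNReal.ofReal (l ^ n) * volume A :=
        mul_le_mul' (ENNReal.ofReal_le_ofReal hθln) hxS'
    _ = ENNReal.ofReal |l ^ n| * volume A := by
        rw [abs_of_nonneg (pow_nonneg hl0 n)]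
    _ = volume (((1 - l) • k) +ᵥ (l • A)) := (hv1.trans hv2).symm
    _ ≤ volume (K ∩ ({p} - L)) := measure_mono H
end

section
/- The function x ↦ |K ∩ (x - L)| from ℝⁿ to ℝ is continuous, for convex bodies K, L in ℝⁿ. -/
open MeasureTheory Set Metric Filter Topology
open scoped Pointwise

/-- Auxiliary estimate: if `A, B ⊆ C` with everything of finite measure, then
`μ (K ∩ A)` exceeds `μ (K ∩ B)` by at most `μ C - μ B` (in real numbers). -/
lemma meas_inter_le_aux {α : Type*} [MeasurableSpace α] (μ : Measure α)
    (K A B C : Set α) (hB : MeasurableSet B) (hAC : A ⊆ C) (hBC : B ⊆ C)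
    (hC : μ C ≠ ⊤) :
    (μ (K ∩ A)).toReal ≤ (μ (K ∩ B)).toReal + ((μ C).toReal - (μ B).toReal) := by
  have hKA : μ (K ∩ A) ≠ ⊤ := ((measure_mono (inter_subset_right.trans hAC)).trans_lt
    (lt_top_iff_ne_top.2 hC)).ne
  have hKB : μ (K ∩ B) ≠ ⊤ := ((measure_mono (inter_subset_right.trans hBC)).trans_lt
    (lt_top_iff_ne_top.2 hC)).ne
  have hAB : μ (A \ B) ≠ ⊤ := ((measure_mono (diff_subset.trans hAC)).trans_lt
    (lt_top_iff_ne_top.2 hC)).ne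
  have hBfin : μ B ≠ ⊤ := ((measure_mono hBC).trans_lt (lt_top_iff_ne_top.2 hC)).ne
  have h1 : μ (K ∩ A) ≤ μ (K ∩ B) + μ (A \ B) := by
    refine (measure_mono ?_).trans (measure_union_le _ _)
    intro y hy
    by_cases hyB : y ∈ B
    · exact Or.inl ⟨hy.1, hyB⟩
    · exact Or.inr ⟨hy.2, hyB⟩
  have h2 : μ (A \ B) + μ B ≤ μ C := by
    rw [← measure_union disjoint_sdiff_left hB, diff_union_self]
    exact measure_mono (union_subset hAC hBC)
  have h1' : (μ (K ∩ A)).toReal ≤ (μ (K ∩ B)).toReal + (μ (A \ B)).toReal := by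
    rw [← ENNReal.toReal_add hKB hAB]
    exact ENNReal.toReal_mono (by simp [hKB, hAB]) h1
  have h2' : (μ (A \ B)).toReal + (μ B).toReal ≤ (μ C).toReal := by
    rw [← ENNReal.toReal_add hAB hBfin]
    exact ENNReal.toReal_mono hC h2
  linarith

theorem intersection_volume_continuous (n : ℕ) (K L : Set (EuclideanSpace ℝ (Fin n)))
    (hK : IsCompact K) (hKc : Convex ℝ K) (hKi : (interior K).Nonempty)
    (hL : IsCompact L) (hLc : Convex ℝ L) (hLi : (interior L).Nonempty) :
    Continuous (fun x : EuclideanSpace ℝ (Fin n) => (volume (K ∩ ({x} - L))).toReal) := by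
  rw [continuous_iff_continuousAt]
  intro x₀
  set μ := (volume : Measure (EuclideanSpace ℝ (Fin n))) with hμ
  set S := ({x₀} - L : Set (EuclideanSpace ℝ (Fin n))) with hSdef
  have himg : ∀ x : EuclideanSpace ℝ (Fin n), ({x} - L : Set _) = (fun l => x - l) '' L := by
    intro x; ext y
    simp [Set.mem_sub]
  have hAcomp : ∀ x : EuclideanSpace ℝ (Fin n), IsCompact ({x} - L : Set _) := by
    intro x
    rw [himg x]
    exact hL.image (continuous_const.sub continuous_id)
  have hScomp : IsCompact S := hAcomp x₀
  -- {x} - L is a translate of S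
  have hAe : ∀ x : EuclideanSpace ℝ (Fin n), ({x} - L : Set _) = (x - x₀) +ᵥ S := by
    intro x
    ext y
    simp only [hSdef, Set.mem_sub, Set.mem_vadd_set, Set.mem_singleton_iff]
    constructor
    · rintro ⟨a, rfl, l, hl, rfl⟩
      exact ⟨x₀ - l, ⟨x₀, rfl, l, hl, rfl⟩, by simp only [vadd_eq_add]; abel⟩
    · rintro ⟨s, ⟨a, rfl, l, hl, rfl⟩, rfl⟩
      exact ⟨x, rfl, l, hl, by simp only [vadd_eq_add]; abel⟩
  have hμA : ∀ x : EuclideanSpace ℝ (Fin n), μ ({x} - L) = μ S := by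
    intro x
    rw [hAe x, measure_vadd]
  -- containments in the thickening
  have hsub : ∀ x : EuclideanSpace ℝ (Fin n),
      ({x} - L : Set _) ∪ S ⊆ cthickening (dist x x₀) S := by
    intro x
    refine union_subset ?_ (self_subset_cthickening S)
    rintro y ⟨a, ha, l, hl, rfl⟩
    rw [Set.mem_singleton_iff] at ha; subst ha
    refine mem_cthickening_of_dist_le _ (x₀ - l) _ _ ⟨x₀, rfl, l, hl, rfl⟩ ?_
    rw [dist_sub_right]
  have hCfin : ∀ x : EuclideanSpace ℝ (Fin n), μ (cthickening (dist x x₀) S) ≠ ⊤ :=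
    fun x => hScomp.isBounded.cthickening.measure_lt_top.ne
  have hSmeas : MeasurableSet S := hScomp.isClosed.measurableSet
  rw [ContinuousAt, tendsto_iff_dist_tendsto_zero]
  refine squeeze_zero (fun x => dist_nonneg)
    (g := fun x => (μ (cthickening (dist x x₀) S)).toReal - (μ S).toReal) ?_ ?_
  · intro x
    have h1 := meas_inter_le_aux μ K ({x} - L) S (cthickening (dist x x₀) S)
      hSmeas ((subset_union_left).trans (hsub x)) ((subset_union_right).trans (hsub x))
      (hCfin x)
    have h2 := meas_inter_le_aux μ K S ({x} - L) (cthickening (dist x x₀) S)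
      (hAcomp x).isClosed.measurableSet ((subset_union_right).trans (hsub x))
      ((subset_union_left).trans (hsub x)) (hCfin x)
    rw [hμA x] at h2
    rw [Real.dist_eq, abs_sub_le_iff]
    simp only [← hSdef]
    constructor <;> linarith
  · have hd : Tendsto (fun x : EuclideanSpace ℝ (Fin n) => dist x x₀) (𝓝 x₀) (𝓝 0) := by
      exact (continuous_id.dist continuous_const).tendsto' x₀ 0 (dist_self x₀)
    have ht := tendsto_measure_cthickening_of_isCompact (μ := μ) hScomp
    have := ((ENNReal.tendsto_toReal hScomp.measure_lt_top.ne).comp ht).comp hd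
    simpa using this.sub_const (μ S).toReal
end

section
/- Let K, L be convex bodies in ℝⁿ and θ ∈ [0,1). Then the boundary of K +_θ L equals {x ∈ K + L : |K ∩ (x - L)| = θ · M(K,L)}. -/
open MeasureTheory Set
open scoped Pointwise ENNReal


/-- One-dimensional Brunn-Minkowski: if `W` contains all `a*s+b*t`, then
`vol W ≥ a vol S + b vol T`. -/
lemma bm1d {a b : ℝ} (ha : 0 < a) (hb : 0 < b) (hab : a + b = 1)
    {S T W : Set ℝ} (hS : MeasurableSet S) (hT : MeasurableSet T)
    (hSne : S.Nonempty) (hTne : T.Nonempty)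
    (hSfin : volume S ≠ ∞) (hTfin : volume T ≠ ∞)
    (hsub : ∀ s ∈ S, ∀ t ∈ T, a * s + b * t ∈ W) :
    ENNReal.ofReal a * volume S + ENNReal.ofReal b * volume T ≤ volume W := by
  refine ENNReal.le_of_forall_pos_le_add fun ε hε hWfin => ?_
  have hε' : (ε : ℝ≥0∞) ≠ 0 := by simpa using hε.ne'
  obtain ⟨K₁, hK₁S, hK₁c, hK₁⟩ := hS.exists_isCompact_lt_add hSfin hε'
  obtain ⟨K₂, hK₂S, hK₂c, hK₂⟩ := hT.exists_isCompact_lt_add hTfin hε'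
  obtain ⟨s₀, hs₀⟩ := hSne
  obtain ⟨t₀, ht₀⟩ := hTne
  set K₁' : Set ℝ := insert s₀ K₁ with hK₁'def
  set K₂' : Set ℝ := insert t₀ K₂ with hK₂'def
  have hK₁'c : IsCompact K₁' := hK₁c.insert s₀
  have hK₂'c : IsCompact K₂' := hK₂c.insert t₀
  have hK₁'S : K₁' ⊆ S := insert_subset hs₀ hK₁S
  have hK₂'S : K₂' ⊆ T := insert_subset ht₀ hK₂S
  have hK₁'ne : K₁'.Nonempty := ⟨s₀, mem_insert _ _⟩
  have hK₂'ne : K₂'.Nonempty := ⟨t₀, mem_insert _ _⟩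
  set σ := sSup K₁' with hσdef
  set ι := sInf K₂' with hιdef
  have hσ : σ ∈ K₁' := hK₁'c.sSup_mem hK₁'ne
  have hι : ι ∈ K₂' := hK₂'c.sInf_mem hK₂'ne
  set U : Set ℝ := (fun s => a * s + b * ι) '' K₁' with hUdef
  set V : Set ℝ := (fun t => a * σ + b * t) '' K₂' with hVdef
  have hUW : U ⊆ W := by
    rintro _ ⟨s, hs, rfl⟩; exact hsub s (hK₁'S hs) ι (hK₂'S hι)
  have hVW : V ⊆ W := by
    rintro _ ⟨t, ht, rfl⟩; exact hsub σ (hK₁'S hσ) t (hK₂'S ht)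
  -- volumes of U and V
  have hvolU : volume U = ENNReal.ofReal a * volume K₁' := by
    have : U = (b * ι) +ᵥ (a • K₁') := by
      ext x
      simp only [hUdef, mem_image, Set.mem_vadd_set, Set.mem_smul_set, vadd_eq_add, smul_eq_mul]
      constructor
      · rintro ⟨s, hs, rfl⟩; exact ⟨a * s, ⟨s, hs, rfl⟩, by ring⟩
      · rintro ⟨_, ⟨s, hs, rfl⟩, rfl⟩; exact ⟨s, hs, by ring⟩
    rw [this, measure_vadd, Measure.addHaar_smul]
    simp [abs_of_pos ha]
  have hvolV : volume V = ENNReal.ofReal b * volume K₂' := by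
    have : V = (a * σ) +ᵥ (b • K₂') := by
      ext x
      simp only [hVdef, mem_image, Set.mem_vadd_set, Set.mem_smul_set, vadd_eq_add, smul_eq_mul]
      constructor
      · rintro ⟨t, ht, rfl⟩; exact ⟨b * t, ⟨t, ht, rfl⟩, by ring⟩
      · rintro ⟨_, ⟨t, ht, rfl⟩, rfl⟩; exact ⟨t, ht, by ring⟩
    rw [this, measure_vadd, Measure.addHaar_smul]
    simp [abs_of_pos hb]
  have hUV : U ∩ V ⊆ {a * σ + b * ι} := by
    rintro x ⟨⟨s, hs, rfl⟩, ⟨t, ht, hx⟩⟩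
    have h1 : a * s + b * ι ≤ a * σ + b * ι := by
      have : s ≤ σ := le_csSup hK₁'c.bddAbove hs
      nlinarith
    have h2 : a * σ + b * ι ≤ a * s + b * ι := by
      rw [show a * s + b * ι = a * σ + b * t from hx.symm]
      have : ι ≤ t := csInf_le hK₂'c.bddBelow ht
      nlinarith
    simp [le_antisymm h1 h2]
  have key : volume U + volume V ≤ volume W := by
    have h0 : volume (U ∩ V) = 0 :=
      measure_mono_null hUV (measure_singleton _)
    calc volume U + volume V
        = volume (U ∪ V) + volume (U ∩ V) := (measure_union_add_inter₀ U
          ((hK₂'c.image (continuous_const.add (continuous_const.mul continuous_id))).measurableSet.nullMeasurableSet)).symm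
      _ = volume (U ∪ V) := by rw [h0, add_zero]
      _ ≤ volume W := measure_mono (union_subset hUW hVW)
  -- put everything together
  have hS' : volume S ≤ volume K₁' + ε :=
    le_trans hK₁.le (add_le_add_left (measure_mono (subset_insert _ _)) _)
  have hT' : volume T ≤ volume K₂' + ε :=
    le_trans hK₂.le (add_le_add_left (measure_mono (subset_insert _ _)) _)
  calc ENNReal.ofReal a * volume S + ENNReal.ofReal b * volume T
      ≤ (ENNReal.ofReal a * volume K₁' + ENNReal.ofReal a * ε)
        + (ENNReal.ofReal b * volume K₂' + ENNReal.ofReal b * ε) := by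
        gcongr <;> [skip; skip] <;>
          first
          | exact le_trans (mul_le_mul_right hS' _) (by rw [mul_add])
          | exact le_trans (mul_le_mul_right hT' _) (by rw [mul_add])
    _ = (volume U + volume V) + (ENNReal.ofReal a + ENNReal.ofReal b) * ε := by
        rw [hvolU, hvolV]; ring
    _ ≤ volume W + 1 * ε := by
        gcongr
        rw [← ENNReal.ofReal_add ha.le hb.le, hab, ENNReal.ofReal_one]
    _ = volume W + ε := by rw [one_mul]

/-- Layer cake representation for a finite-valued function. -/
lemma layer (f : ℝ → ℝ≥0∞) (hf : Measurable f) (hbd : ∀ s, f s ≠ ∞) :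
    ∫⁻ s, f s = ∫⁻ t in Ioi (0:ℝ), volume {s | ENNReal.ofReal t ≤ f s} := by
  have key := lintegral_eq_lintegral_meas_le (volume : Measure ℝ)
    (f := fun s => (f s).toReal) (ae_of_all _ fun s => ENNReal.toReal_nonneg)
    hf.ennreal_toReal.aemeasurable
  have h1 : ∫⁻ s, ENNReal.ofReal ((f s).toReal) = ∫⁻ s, f s :=
    lintegral_congr fun s => ENNReal.ofReal_toReal (hbd s)
  rw [h1] at key
  rw [key]
  refine lintegral_congr fun t => ?_
  congr 1
  ext s
  simp only [mem_setOf_eq]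
  exact (ENNReal.ofReal_le_iff_le_toReal (hbd s)).symm

/-- Tail truncation: if `f ≤ 1` the layer-cake integral only sees `t ∈ (0,1)`. -/
lemma tail (f : ℝ → ℝ≥0∞) (hle : ∀ s, f s ≤ 1) :
    ∫⁻ t in Ioi (0:ℝ), volume {s | ENNReal.ofReal t ≤ f s}
      = ∫⁻ t in Ioo (0:ℝ) 1, volume {s | ENNReal.ofReal t ≤ f s} := by
  have hsplit : Ioi (0:ℝ) = Ioo (0:ℝ) 1 ∪ Ici (1:ℝ) := by
    ext t; simp only [mem_Ioi, mem_union, mem_Ioo, mem_Ici]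
    constructor
    · intro ht; by_cases h : t < 1; exacts [Or.inl ⟨ht, h⟩, Or.inr (not_lt.mp h)]
    · rintro (⟨h, _⟩ | h); exacts [h, lt_of_lt_of_le one_pos h]
  have hdisj : Disjoint (Ioo (0:ℝ) 1) (Ici (1:ℝ)) := by
    rw [Set.disjoint_left]; rintro t ⟨_, h1⟩ h2; exact absurd h2 (not_le.mpr h1)
  rw [hsplit, lintegral_union measurableSet_Ici hdisj]
  have hIci : ∫⁻ t in Ici (1:ℝ), volume {s | ENNReal.ofReal t ≤ f s} = 0 := by
    rw [setLIntegral_congr (Ioi_ae_eq_Ici (a := (1:ℝ))).symm]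
    rw [setLIntegral_congr_fun measurableSet_Ioi
      (fun t (ht : 1 < t) => ?_), lintegral_zero]
    have : {s | ENNReal.ofReal t ≤ f s} = ∅ := by
      ext s; simp only [mem_setOf_eq, mem_empty_iff_false, iff_false, not_le]
      exact lt_of_le_of_lt (hle s) (by simpa using ht)
    simp [this]
  rw [hIci, add_zero]

/-- AM-GM for two ENNReal numbers. -/
lemma amgm (X Y : ℝ≥0∞) {a b : ℝ} (ha : 0 < a) (hb : 0 < b) (hab : a + b = 1) :
    X ^ a * Y ^ b ≤ ENNReal.ofReal a * X + ENNReal.ofReal b * Y := by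
  rcases eq_or_ne X ∞ with rfl | hX
  · refine le_trans le_top (le_of_eq ?_)
    rw [ENNReal.mul_top (by simpa using ha)]; exact (top_add _).symm
  rcases eq_or_ne Y ∞ with rfl | hY
  · refine le_trans le_top (le_of_eq ?_)
    rw [ENNReal.mul_top (by simpa using hb)]; exact (add_top _).symm
  rcases eq_or_ne X 0 with rfl | hX0
  · rw [ENNReal.zero_rpow_of_pos ha, zero_mul]; exact zero_le
  rcases eq_or_ne Y 0 with rfl | hY0
  · rw [ENNReal.zero_rpow_of_pos hb, mul_zero]; exact zero_le
  set x := X.toReal with hx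
  set y := Y.toReal with hy
  have hx0 : 0 < x := ENNReal.toReal_pos hX0 hX
  have hy0 : 0 < y := ENNReal.toReal_pos hY0 hY
  have hXx : X = ENNReal.ofReal x := (ENNReal.ofReal_toReal hX).symm
  have hYy : Y = ENNReal.ofReal y := (ENNReal.ofReal_toReal hY).symm
  rw [hXx, hYy, ENNReal.ofReal_rpow_of_pos hx0, ENNReal.ofReal_rpow_of_pos hy0,
    ← ENNReal.ofReal_mul (Real.rpow_nonneg hx0.le _),
    ← ENNReal.ofReal_mul ha.le, ← ENNReal.ofReal_mul hb.le,
    ← ENNReal.ofReal_add (by positivity) (by positivity)]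
  exact ENNReal.ofReal_le_ofReal
    (Real.geom_mean_le_arith_mean2_weighted ha.le hb.le hx0.le hy0.le hab)

lemma pl1d {a b : ℝ} (ha : 0 < a) (hb : 0 < b) (hab : a + b = 1)
    (u v w : ℝ → ℝ≥0∞) (hu : Measurable u) (hv : Measurable v) (hw : Measurable w)
    (R : ℝ) (huR : ∀ s, u s ≠ 0 → s ∈ Icc (-R) R) (hvR : ∀ s, v s ≠ 0 → s ∈ Icc (-R) R)
    (hU0 : (⨆ s, u s) ≠ 0) (hUfin : (⨆ s, u s) ≠ ∞)
    (hV0 : (⨆ s, v s) ≠ 0) (hVfin : (⨆ s, v s) ≠ ∞)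
    (hwfin : ∀ s, w s ≠ ∞)
    (hmain : ∀ s₁ s₂, u s₁ ^ a * v s₂ ^ b ≤ w (a * s₁ + b * s₂)) :
    (∫⁻ s, u s) ^ a * (∫⁻ s, v s) ^ b ≤ ∫⁻ s, w s := by
  set U := ⨆ s, u s with hUdef
  set V := ⨆ s, v s with hVdef
  set c := U ^ a * V ^ b with hcdef
  have hUa0 : U ^ a ≠ 0 := (ENNReal.rpow_pos (pos_iff_ne_zero.mpr hU0) hUfin).ne'
  have hUafin : U ^ a ≠ ∞ := ENNReal.rpow_ne_top_of_nonneg ha.le hUfin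
  have hVb0 : V ^ b ≠ 0 := (ENNReal.rpow_pos (pos_iff_ne_zero.mpr hV0) hVfin).ne'
  have hVbfin : V ^ b ≠ ∞ := ENNReal.rpow_ne_top_of_nonneg hb.le hVfin
  have hc0 : c ≠ 0 := mul_ne_zero hUa0 hVb0
  have hcfin : c ≠ ∞ := ENNReal.mul_ne_top hUafin hVbfin
  set uN := fun s => U⁻¹ * u s with huNdef
  set vN := fun s => V⁻¹ * v s with hvNdef
  set wN := fun s => c⁻¹ * w s with hwNdef
  have huNm : Measurable uN := (measurable_const.mul hu)
  have hvNm : Measurable vN := (measurable_const.mul hv)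
  have hwNm : Measurable wN := (measurable_const.mul hw)
  have huNle : ∀ s, uN s ≤ 1 := fun s => by
    rw [huNdef]
    calc U⁻¹ * u s ≤ U⁻¹ * U := mul_le_mul_right (le_iSup u s) _
    _ = 1 := ENNReal.inv_mul_cancel hU0 hUfin
  have hvNle : ∀ s, vN s ≤ 1 := fun s => by
    rw [hvNdef]
    calc V⁻¹ * v s ≤ V⁻¹ * V := mul_le_mul_right (le_iSup v s) _
    _ = 1 := ENNReal.inv_mul_cancel hV0 hVfin
  have hiSupuN : (⨆ s, uN s) = 1 := by
    rw [huNdef, ← ENNReal.mul_iSup, ← hUdef, ENNReal.inv_mul_cancel hU0 hUfin]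
  have hiSupvN : (⨆ s, vN s) = 1 := by
    rw [hvNdef, ← ENNReal.mul_iSup, ← hVdef, ENNReal.inv_mul_cancel hV0 hVfin]
  -- superlevel sets
  set Su : ℝ → Set ℝ := fun t => {s | ENNReal.ofReal t ≤ uN s} with hSudef
  set Sv : ℝ → Set ℝ := fun t => {s | ENNReal.ofReal t ≤ vN s} with hSvdef
  set Sw : ℝ → Set ℝ := fun t => {s | ENNReal.ofReal t ≤ wN s} with hSwdef
  -- key inequality on superlevel measures, for t ∈ (0,1)
  have hkey : ∀ t ∈ Ioo (0:ℝ) 1,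
      ENNReal.ofReal a * volume (Su t) + ENNReal.ofReal b * volume (Sv t)
        ≤ volume (Sw t) := by
    intro t ht
    have htne : (ENNReal.ofReal t) ≠ 0 := by
      simpa [ENNReal.ofReal_eq_zero, not_le] using ht.1
    have hne : ∀ (f : ℝ → ℝ≥0∞), (⨆ s, f s) = 1 →
        {s | ENNReal.ofReal t ≤ f s}.Nonempty := by
      intro f hf
      have : ENNReal.ofReal t < ⨆ s, f s := by
        rw [hf]; exact ENNReal.ofReal_lt_one.mpr ht.2
      obtain ⟨s, hs⟩ := lt_iSup_iff.mp this
      exact ⟨s, hs.le⟩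
    have hsubu : Su t ⊆ Icc (-R) R := by
      intro s hs
      refine huR s fun h0 => ?_
      have hz : uN s = 0 := by rw [huNdef]; simp [h0]
      rw [hSudef, mem_setOf_eq, hz, le_zero_iff] at hs
      exact htne hs
    have hsubv : Sv t ⊆ Icc (-R) R := by
      intro s hs
      refine hvR s fun h0 => ?_
      have hz : vN s = 0 := by rw [hvNdef]; simp [h0]
      rw [hSvdef, mem_setOf_eq, hz, le_zero_iff] at hs
      exact htne hs
    have hfinu : volume (Su t) ≠ ∞ :=
      (lt_of_le_of_lt (measure_mono hsubu) measure_Icc_lt_top).ne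
    have hfinv : volume (Sv t) ≠ ∞ :=
      (lt_of_le_of_lt (measure_mono hsubv) measure_Icc_lt_top).ne
    refine bm1d ha hb hab (measurableSet_le measurable_const huNm)
      (measurableSet_le measurable_const hvNm) (hne uN hiSupuN) (hne vN hiSupvN)
      hfinu hfinv ?_
    -- the inclusion of combinations in the superlevel set of wN
    intro s₁ hs₁ s₂ hs₂
    rw [mem_setOf_eq] at hs₁ hs₂ ⊢
    have hu1 : U * ENNReal.ofReal t ≤ u s₁ := by
      have := mul_le_mul_right hs₁ U
      rwa [huNdef, ← mul_assoc, ENNReal.mul_inv_cancel hU0 hUfin, one_mul] at this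
    have hv1 : V * ENNReal.ofReal t ≤ v s₂ := by
      have := mul_le_mul_right hs₂ V
      rwa [hvNdef, ← mul_assoc, ENNReal.mul_inv_cancel hV0 hVfin, one_mul] at this
    have hchain : c * ENNReal.ofReal t ≤ w (a * s₁ + b * s₂) := by
      refine le_trans ?_ (hmain s₁ s₂)
      have h1 : (U * ENNReal.ofReal t) ^ a ≤ u s₁ ^ a :=
        ENNReal.rpow_le_rpow hu1 ha.le
      have h2 : (V * ENNReal.ofReal t) ^ b ≤ v s₂ ^ b :=
        ENNReal.rpow_le_rpow hv1 hb.le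
      have h3 : ENNReal.ofReal t ^ a * ENNReal.ofReal t ^ b = ENNReal.ofReal t := by
        rw [← ENNReal.rpow_add _ _ htne ENNReal.ofReal_ne_top, hab, ENNReal.rpow_one]
      calc c * ENNReal.ofReal t
          = (U ^ a * ENNReal.ofReal t ^ a) * (V ^ b * ENNReal.ofReal t ^ b) := by
            rw [hcdef]
            conv_lhs => rw [← h3]
            ring
        _ = (U * ENNReal.ofReal t) ^ a * (V * ENNReal.ofReal t) ^ b := by
            rw [ENNReal.mul_rpow_of_nonneg _ _ ha.le, ENNReal.mul_rpow_of_nonneg _ _ hb.le]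
        _ ≤ u s₁ ^ a * v s₂ ^ b := mul_le_mul' h1 h2
    rw [hwNdef]
    calc ENNReal.ofReal t = c⁻¹ * (c * ENNReal.ofReal t) := by
          rw [← mul_assoc, ENNReal.inv_mul_cancel hc0 hcfin, one_mul]
      _ ≤ c⁻¹ * w (a * s₁ + b * s₂) := mul_le_mul_right hchain _
  -- measurability of superlevel measures
  have hmu : Measurable fun t => volume (Su t) :=
    Antitone.measurable fun t t' htt' =>
      measure_mono fun s hs => le_trans (ENNReal.ofReal_le_ofReal htt') hs
  have hmv : Measurable fun t => volume (Sv t) :=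
    Antitone.measurable fun t t' htt' =>
      measure_mono fun s hs => le_trans (ENNReal.ofReal_le_ofReal htt') hs
  -- layer cake computations
  have hwNfin : ∀ s, wN s ≠ ∞ := fun s => by
    rw [hwNdef]
    exact ENNReal.mul_ne_top (ENNReal.inv_ne_top.mpr hc0) (hwfin s)
  have huNfin : ∀ s, uN s ≠ ∞ := fun s => (lt_of_le_of_lt (huNle s) ENNReal.one_lt_top).ne
  have hvNfin : ∀ s, vN s ≠ ∞ := fun s => (lt_of_le_of_lt (hvNle s) ENNReal.one_lt_top).ne
  have hlayu : ∫⁻ s, uN s = ∫⁻ t in Ioo (0:ℝ) 1, volume (Su t) := by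
    rw [layer uN huNm huNfin, tail uN huNle]
  have hlayv : ∫⁻ s, vN s = ∫⁻ t in Ioo (0:ℝ) 1, volume (Sv t) := by
    rw [layer vN hvNm hvNfin, tail vN hvNle]
  have hlayw : ∫⁻ t in Ioo (0:ℝ) 1, volume (Sw t) ≤ ∫⁻ s, wN s := by
    rw [layer wN hwNm hwNfin]
    exact lintegral_mono_set Ioo_subset_Ioi_self
  -- main inequality for normalized functions
  have hnorm : ENNReal.ofReal a * (∫⁻ s, uN s) + ENNReal.ofReal b * (∫⁻ s, vN s)
      ≤ ∫⁻ s, wN s := by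
    rw [hlayu, hlayv]
    rw [← lintegral_const_mul _ hmu, ← lintegral_const_mul _ hmv]
    rw [← lintegral_add_left (hmu.const_mul _)]
    refine le_trans ?_ hlayw
    refine lintegral_mono_ae ((ae_restrict_iff' measurableSet_Ioo).mpr
      (ae_of_all _ fun t ht => hkey t ht))
  have hgm : (∫⁻ s, uN s) ^ a * (∫⁻ s, vN s) ^ b ≤ ∫⁻ s, wN s :=
    le_trans (amgm _ _ ha hb hab) hnorm
  -- unnormalize
  have hiu : ∫⁻ s, uN s = U⁻¹ * ∫⁻ s, u s := by
    rw [huNdef]; exact lintegral_const_mul _ hu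
  have hiv : ∫⁻ s, vN s = V⁻¹ * ∫⁻ s, v s := by
    rw [hvNdef]; exact lintegral_const_mul _ hv
  have hiw : ∫⁻ s, wN s = c⁻¹ * ∫⁻ s, w s := by
    rw [hwNdef]; exact lintegral_const_mul _ hw
  rw [hiu, hiv, hiw] at hgm
  rw [ENNReal.mul_rpow_of_nonneg _ _ ha.le, ENNReal.mul_rpow_of_nonneg _ _ hb.le] at hgm
  rw [ENNReal.inv_rpow, ENNReal.inv_rpow] at hgm
  have hrw : (U ^ a)⁻¹ * (∫⁻ s, u s) ^ a * ((V ^ b)⁻¹ * (∫⁻ s, v s) ^ b)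
      = c⁻¹ * ((∫⁻ s, u s) ^ a * (∫⁻ s, v s) ^ b) := by
    rw [hcdef, ENNReal.mul_inv (Or.inl hUa0) (Or.inl hUafin)]
    ring
  rw [hrw] at hgm
  rwa [ENNReal.mul_le_mul_iff_right (ENNReal.inv_ne_zero.mpr hcfin)
    (ENNReal.inv_ne_top.mpr hc0)] at hgm

lemma cons_combo {n : ℕ} (a b s₁ s₂ : ℝ) (y₁ y₂ : Fin n → ℝ) :
    (Fin.cons (a * s₁ + b * s₂) (a • y₁ + b • y₂) : Fin (n+1) → ℝ)
      = a • (Fin.cons s₁ y₁ : Fin (n+1) → ℝ) + b • (Fin.cons s₂ y₂ : Fin (n+1) → ℝ) := by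
  funext i
  refine Fin.cases ?_ (fun j => ?_) i
  · simp [smul_eq_mul]
  · simp [smul_eq_mul]

lemma slice_preimage {n : ℕ} (C : Set (Fin (n+1) → ℝ)) (s : ℝ) :
    Prod.mk s ⁻¹' ((MeasurableEquiv.piFinSuccAbove (fun _ : Fin (n+1) => ℝ) 0) '' C)
      = {y : Fin n → ℝ | Fin.cons s y ∈ C} := by
  ext y
  rw [MeasurableEquiv.image_eq_preimage_symm]
  simp only [mem_preimage, mem_setOf_eq, MeasurableEquiv.piFinSuccAbove_symm_apply,
    Fin.insertNthEquiv_zero, Fin.consEquiv_apply]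
  exact Iff.rfl

lemma slice_volume {n : ℕ} (C : Set (Fin (n+1) → ℝ)) (hC : MeasurableSet C) :
    volume C = ∫⁻ s : ℝ, volume {y : Fin n → ℝ | Fin.cons s y ∈ C} := by
  set e := MeasurableEquiv.piFinSuccAbove (fun _ : Fin (n+1) => ℝ) 0 with hedef
  have hmp : MeasurePreserving e volume volume :=
    volume_preserving_piFinSuccAbove (fun _ : Fin (n+1) => ℝ) 0
  have himg : volume (e '' C) = volume C := by
    rw [MeasurableEquiv.image_eq_preimage_symm]
    exact (MeasurePreserving.symm e hmp).measure_preimage hC.nullMeasurableSet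
  have hCm' : MeasurableSet (e '' C) := e.measurableSet_image.mpr hC
  rw [← himg, Measure.volume_eq_prod, Measure.prod_apply hCm']
  exact lintegral_congr fun s => by rw [slice_preimage]

lemma slice_meas {n : ℕ} (C : Set (Fin (n+1) → ℝ)) (hC : MeasurableSet C) :
    Measurable fun s : ℝ => volume {y : Fin n → ℝ | Fin.cons s y ∈ C} := by
  set e := MeasurableEquiv.piFinSuccAbove (fun _ : Fin (n+1) => ℝ) 0 with hedef
  have hCm' : MeasurableSet (e '' C) := e.measurableSet_image.mpr hC
  have key := measurable_measure_prodMk_left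
    (ν := (volume : Measure (Fin n → ℝ))) hCm'
  have : (fun s : ℝ => volume {y : Fin n → ℝ | Fin.cons s y ∈ C})
      = fun s : ℝ => volume (Prod.mk s ⁻¹' (e '' C)) :=
    funext fun s => by rw [slice_preimage]
  rw [this]
  exact key

lemma slice_subset_closedBall {n : ℕ} {D : Set (Fin (n+1) → ℝ)} {r : ℝ} (hr : 0 ≤ r)
    (hD : D ⊆ Metric.closedBall 0 r) (s : ℝ) :
    {y : Fin n → ℝ | Fin.cons s y ∈ D} ⊆ Metric.closedBall 0 r := by
  intro y hy
  rw [mem_setOf_eq] at hy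
  have hnorm : ‖(Fin.cons s y : Fin (n+1) → ℝ)‖ ≤ r := by
    have := hD hy; rwa [Metric.mem_closedBall, dist_zero_right] at this
  rw [Metric.mem_closedBall, dist_zero_right]
  rw [pi_norm_le_iff_of_nonneg hr]
  intro j
  calc ‖y j‖ = ‖(Fin.cons s y : Fin (n+1) → ℝ) j.succ‖ := by rw [Fin.cons_succ]
    _ ≤ ‖(Fin.cons s y : Fin (n+1) → ℝ)‖ := norm_le_pi_norm _ _
    _ ≤ r := hnorm

lemma slice_support {n : ℕ} {D : Set (Fin (n+1) → ℝ)} {r : ℝ}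
    (hD : D ⊆ Metric.closedBall 0 r) {s : ℝ}
    (hne : {y : Fin n → ℝ | Fin.cons s y ∈ D}.Nonempty) : s ∈ Icc (-r) r := by
  obtain ⟨y, hy⟩ := hne
  rw [mem_setOf_eq] at hy
  have hnorm : ‖(Fin.cons s y : Fin (n+1) → ℝ)‖ ≤ r := by
    have := hD hy; rwa [Metric.mem_closedBall, dist_zero_right] at this
  have : |s| ≤ r := by
    calc |s| = ‖(Fin.cons s y : Fin (n+1) → ℝ) 0‖ := by rw [Fin.cons_zero]; simp
      _ ≤ ‖(Fin.cons s y : Fin (n+1) → ℝ)‖ := norm_le_pi_norm _ _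
      _ ≤ r := hnorm
  exact abs_le.mp this

theorem bm_pi : ∀ (n : ℕ) {a b : ℝ}, 0 < a → 0 < b → a + b = 1 →
    ∀ {A B : Set (Fin n → ℝ)}, IsCompact A → Convex ℝ A → A.Nonempty →
    IsCompact B → Convex ℝ B → B.Nonempty →
    volume A ^ a * volume B ^ b ≤ volume (a • A + b • B) := by
  intro n
  induction n with
  | zero =>
    intro a b ha hb hab A B hA hAc hAne hB hBc hBne
    haveI : Subsingleton (Fin 0 → ℝ) := ⟨fun f g => funext fun i => i.elim0⟩
    have hvol : ∀ (S : Set (Fin 0 → ℝ)), S.Nonempty → volume S = 1 := by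
      intro S hS
      have : S = univ := hS.eq_univ
      rw [this, volume_pi, Measure.pi_univ]
      simp
    rw [hvol A hAne, hvol B hBne, hvol _ ?hne]
    · simp [ENNReal.one_rpow]
    case hne =>
      obtain ⟨x, hx⟩ := hAne
      obtain ⟨y, hy⟩ := hBne
      exact ⟨a • x + b • y, add_mem_add (smul_mem_smul_set hx) (smul_mem_smul_set hy)⟩
  | succ n ih =>
    intro a b ha hb hab A B hA hAc hAne hB hBc hBne
    rcases eq_or_ne (volume A) 0 with h0 | hA0
    · rw [h0, ENNReal.zero_rpow_of_pos ha, zero_mul]; exact zero_le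
    rcases eq_or_ne (volume B) 0 with h0 | hB0
    · rw [h0, ENNReal.zero_rpow_of_pos hb, mul_zero]; exact zero_le
    set C : Set (Fin (n+1) → ℝ) := a • A + b • B with hCdef
    have hCcomp : IsCompact C := (hA.smul a).add (hB.smul b)
    have hAm : MeasurableSet A := hA.measurableSet
    have hBm : MeasurableSet B := hB.measurableSet
    have hCm : MeasurableSet C := hCcomp.measurableSet
    -- bounding balls
    obtain ⟨RA, hRA⟩ := hA.isBounded.subset_closedBall 0
    obtain ⟨RB, hRB⟩ := hB.isBounded.subset_closedBall 0
    obtain ⟨RC, hRC⟩ := hCcomp.isBounded.subset_closedBall 0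
    set R : ℝ := max (max RA RB) 0 with hRdef
    have hR0 : 0 ≤ R := le_max_right _ _
    have hAR : A ⊆ Metric.closedBall 0 R :=
      hRA.trans (Metric.closedBall_subset_closedBall ((le_max_left _ _).trans (le_max_left _ _)))
    have hBR : B ⊆ Metric.closedBall 0 R :=
      hRB.trans (Metric.closedBall_subset_closedBall ((le_max_right _ _).trans (le_max_left _ _)))
    set R' : ℝ := max RC 0 with hR'def
    have hR'0 : 0 ≤ R' := le_max_right _ _
    have hCR : C ⊆ Metric.closedBall 0 R' :=
      hRC.trans (Metric.closedBall_subset_closedBall (le_max_left _ _))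
    -- slice functions
    set u : ℝ → ℝ≥0∞ := fun s => volume {y : Fin n → ℝ | Fin.cons s y ∈ A} with hudef
    set v : ℝ → ℝ≥0∞ := fun s => volume {y : Fin n → ℝ | Fin.cons s y ∈ B} with hvdef
    set w : ℝ → ℝ≥0∞ := fun s => volume {y : Fin n → ℝ | Fin.cons s y ∈ C} with hwdef
    have hvolA : volume A = ∫⁻ s, u s := slice_volume A hAm
    have hvolB : volume B = ∫⁻ s, v s := slice_volume B hBm
    have hvolC : volume C = ∫⁻ s, w s := slice_volume C hCm
    have hum : Measurable u := slice_meas A hAm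
    have hvm : Measurable v := slice_meas B hBm
    have hwm : Measurable w := slice_meas C hCm
    have huR : ∀ s, u s ≠ 0 → s ∈ Icc (-R) R := by
      intro s hs
      refine slice_support hAR (nonempty_of_measure_ne_zero hs)
    have hvR : ∀ s, v s ≠ 0 → s ∈ Icc (-R) R := by
      intro s hs
      refine slice_support hBR (nonempty_of_measure_ne_zero hs)
    have hubd : ∀ s, u s ≤ volume (Metric.closedBall (0 : Fin n → ℝ) R) :=
      fun s => measure_mono (slice_subset_closedBall hR0 hAR s)
    have hvbd : ∀ s, v s ≤ volume (Metric.closedBall (0 : Fin n → ℝ) R) :=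
      fun s => measure_mono (slice_subset_closedBall hR0 hBR s)
    have hwbd : ∀ s, w s ≤ volume (Metric.closedBall (0 : Fin n → ℝ) R') :=
      fun s => measure_mono (slice_subset_closedBall hR'0 hCR s)
    have hUfin : (⨆ s, u s) ≠ ∞ :=
      ((iSup_le hubd).trans_lt measure_closedBall_lt_top).ne
    have hVfin : (⨆ s, v s) ≠ ∞ :=
      ((iSup_le hvbd).trans_lt measure_closedBall_lt_top).ne
    have hwfin : ∀ s, w s ≠ ∞ :=
      fun s => ((hwbd s).trans_lt measure_closedBall_lt_top).ne
    have hU0 : (⨆ s, u s) ≠ 0 := by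
      intro h
      apply hA0
      rw [hvolA]
      have hz : ∀ s, u s = 0 :=
        fun s => le_antisymm ((le_iSup u s).trans h.le) (zero_le)
      rw [lintegral_congr hz, lintegral_zero]
    have hV0 : (⨆ s, v s) ≠ 0 := by
      intro h
      apply hB0
      rw [hvolB]
      have hz : ∀ s, v s = 0 :=
        fun s => le_antisymm ((le_iSup v s).trans h.le) (zero_le)
      rw [lintegral_congr hz, lintegral_zero]
    -- main pointwise hypothesis from induction
    have hmain : ∀ s₁ s₂, u s₁ ^ a * v s₂ ^ b ≤ w (a * s₁ + b * s₂) := by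
      intro s₁ s₂
      by_cases h1 : {y : Fin n → ℝ | Fin.cons s₁ y ∈ A}.Nonempty
      swap
      · rw [not_nonempty_iff_eq_empty] at h1
        have : u s₁ = 0 := by rw [hudef]; simp [h1]
        rw [this, ENNReal.zero_rpow_of_pos ha, zero_mul]
        exact zero_le
      by_cases h2 : {y : Fin n → ℝ | Fin.cons s₂ y ∈ B}.Nonempty
      swap
      · rw [not_nonempty_iff_eq_empty] at h2
        have : v s₂ = 0 := by rw [hvdef]; simp [h2]
        rw [this, ENNReal.zero_rpow_of_pos hb, mul_zero]
        exact zero_le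
      -- slices are compact and convex
      have hconsc : ∀ s : ℝ, Continuous fun y : Fin n → ℝ => (Fin.cons s y : Fin (n+1) → ℝ) := by
        intro s
        refine continuous_pi fun i => ?_
        refine Fin.cases ?_ (fun j => ?_) i
        · simp only [Fin.cons_zero]; exact continuous_const
        · simp only [Fin.cons_succ]; exact continuous_apply j
      have hsliceA : IsCompact {y : Fin n → ℝ | Fin.cons s₁ y ∈ A} := by
        refine Metric.isCompact_of_isClosed_isBounded
          (hA.isClosed.preimage (hconsc s₁))
          (Metric.isBounded_closedBall.subset (slice_subset_closedBall hR0 hAR s₁))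
      have hsliceB : IsCompact {y : Fin n → ℝ | Fin.cons s₂ y ∈ B} := by
        refine Metric.isCompact_of_isClosed_isBounded
          (hB.isClosed.preimage (hconsc s₂))
          (Metric.isBounded_closedBall.subset (slice_subset_closedBall hR0 hBR s₂))
      have hconvA : Convex ℝ {y : Fin n → ℝ | Fin.cons s₁ y ∈ A} := by
        intro y₁ hy₁ y₂ hy₂ c d hc hd hcd
        rw [mem_setOf_eq]
        have : (Fin.cons s₁ (c • y₁ + d • y₂) : Fin (n+1) → ℝ)
            = c • (Fin.cons s₁ y₁ : Fin (n+1) → ℝ) + d • (Fin.cons s₁ y₂ : Fin (n+1) → ℝ) := by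
          have := cons_combo c d s₁ s₁ y₁ y₂
          rwa [show c * s₁ + d * s₁ = s₁ by rw [← add_mul, hcd, one_mul]] at this
        rw [this]
        exact hAc hy₁ hy₂ hc hd hcd
      have hconvB : Convex ℝ {y : Fin n → ℝ | Fin.cons s₂ y ∈ B} := by
        intro y₁ hy₁ y₂ hy₂ c d hc hd hcd
        rw [mem_setOf_eq]
        have : (Fin.cons s₂ (c • y₁ + d • y₂) : Fin (n+1) → ℝ)
            = c • (Fin.cons s₂ y₁ : Fin (n+1) → ℝ) + d • (Fin.cons s₂ y₂ : Fin (n+1) → ℝ) := by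
          have := cons_combo c d s₂ s₂ y₁ y₂
          rwa [show c * s₂ + d * s₂ = s₂ by rw [← add_mul, hcd, one_mul]] at this
        rw [this]
        exact hBc hy₁ hy₂ hc hd hcd
      have hincl : a • {y : Fin n → ℝ | Fin.cons s₁ y ∈ A}
          + b • {y : Fin n → ℝ | Fin.cons s₂ y ∈ B}
          ⊆ {y : Fin n → ℝ | Fin.cons (a * s₁ + b * s₂) y ∈ C} := by
        intro y hy
        rw [Set.mem_add] at hy
        obtain ⟨p, hp, q, hq, rfl⟩ := hy
        obtain ⟨y₁, hy₁, rfl⟩ := hp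
        obtain ⟨y₂, hy₂, rfl⟩ := hq
        rw [mem_setOf_eq, cons_combo]
        exact add_mem_add (smul_mem_smul_set hy₁) (smul_mem_smul_set hy₂)
      exact le_trans (ih ha hb hab hsliceA hconvA h1 hsliceB hconvB h2)
        (measure_mono hincl)
    calc volume A ^ a * volume B ^ b = (∫⁻ s, u s) ^ a * (∫⁻ s, v s) ^ b := by
          rw [hvolA, hvolB]
      _ ≤ ∫⁻ s, w s := pl1d ha hb hab u v w hum hvm hwm R huR hvR hU0 hUfin hV0 hVfin
          hwfin hmain
      _ = volume C := hvolC.symm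

theorem bm_euc {n : ℕ} {a b : ℝ} (ha : 0 < a) (hb : 0 < b) (hab : a + b = 1)
    {A B : Set (EuclideanSpace ℝ (Fin n))} (hA : IsCompact A) (hAc : Convex ℝ A)
    (hAne : A.Nonempty) (hB : IsCompact B) (hBc : Convex ℝ B) (hBne : B.Nonempty) :
    volume A ^ a * volume B ^ b ≤ volume (a • A + b • B) := by
  set e := (MeasurableEquiv.toLp 2 (Fin n → ℝ)).symm with hedef
  set L := PiLp.continuousLinearEquiv 2 ℝ (fun _ : Fin n => ℝ) with hLdef
  have hcoe : ⇑e = ⇑L := rfl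
  have hmp : MeasurePreserving e volume volume :=
    EuclideanSpace.volume_preserving_symm_measurableEquiv_toLp (Fin n)
  have himg : ∀ S : Set (EuclideanSpace ℝ (Fin n)), MeasurableSet S →
      volume (e '' S) = volume S := by
    intro S hS
    rw [MeasurableEquiv.image_eq_preimage_symm]
    exact (MeasurePreserving.symm e hmp).measure_preimage hS.nullMeasurableSet
  have hCcomp : IsCompact (a • A + b • B) := (hA.smul a).add (hB.smul b)
  have himgadd : e '' (a • A + b • B) = a • (e '' A) + b • (e '' B) := by
    rw [hcoe, image_add, image_smul_set, image_smul_set]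
  have hA' : IsCompact (e '' A) := by rw [hcoe]; exact hA.image L.continuous
  have hB' : IsCompact (e '' B) := by rw [hcoe]; exact hB.image L.continuous
  have hAc' : Convex ℝ (e '' A) := by
    rw [hcoe]
    exact hAc.is_linear_image ⟨fun x y => map_add L x y, fun c x => map_smul L c x⟩
  have hBc' : Convex ℝ (e '' B) := by
    rw [hcoe]
    exact hBc.is_linear_image ⟨fun x y => map_add L x y, fun c x => map_smul L c x⟩
  have key := bm_pi n ha hb hab hA' hAc' (hAne.image e) hB' hBc' (hBne.image e)
  rw [← himgadd, himg A hA.measurableSet, himg B hB.measurableSet,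
    himg _ hCcomp.measurableSet] at key
  exact key

section Continuity

variable {n : ℕ}

local notation "E" => EuclideanSpace ℝ (Fin n)

lemma singleton_sub_eq (x : E) (L : Set E) : {x} - L = (fun l => x - l) '' L := by
  ext z; simp [Set.mem_sub]

/-- Key translation bound: the part of `{x} - L` outside `{y} - L` is contained in
a translate of a collar around `-L`. -/
lemma sub_diff_subset (K L : Set E) (x y : E) :
    ({x} - L) \ ({y} - L)
      ⊆ y +ᵥ (((-L) + Metric.closedBall 0 (dist x y)) \ (-L)) := by
  rintro z ⟨hz1, hz2⟩
  rw [singleton_sub_eq] at hz1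
  obtain ⟨l, hl, rfl⟩ := hz1
  rw [Set.mem_vadd_set]
  refine ⟨(x - l) - y, ⟨?_, ?_⟩, by simp only [vadd_eq_add]; module⟩
  · rw [Set.mem_add]
    refine ⟨-l, Set.neg_mem_neg.mpr hl, x - y, ?_, by module⟩
    rw [Metric.mem_closedBall, dist_zero_right, ← dist_eq_norm]
  · intro hmem
    rw [Set.mem_neg] at hmem
    apply hz2
    rw [singleton_sub_eq]
    exact ⟨-(x - l - y), hmem, by module⟩

lemma f_bound (K L : Set E) (x y : E) :
    volume (K ∩ ({x} - L)) ≤ volume (K ∩ ({y} - L))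
      + volume (((-L) + Metric.closedBall 0 (dist x y)) \ (-L)) := by
  have hsub : K ∩ ({x} - L) ⊆ (K ∩ ({y} - L)) ∪ (({x} - L) \ ({y} - L)) := by
    intro z ⟨hz1, hz2⟩
    by_cases h : z ∈ {y} - L
    · exact Or.inl ⟨hz1, h⟩
    · exact Or.inr ⟨hz2, h⟩
  calc volume (K ∩ ({x} - L))
      ≤ volume (K ∩ ({y} - L)) + volume (({x} - L) \ ({y} - L)) :=
        le_trans (measure_mono hsub) (measure_union_le _ _)
    _ ≤ volume (K ∩ ({y} - L))
        + volume (((-L) + Metric.closedBall 0 (dist x y)) \ (-L)) := by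
        refine add_le_add_right ?_ _
        calc volume (({x} - L) \ ({y} - L))
            ≤ volume (y +ᵥ (((-L) + Metric.closedBall 0 (dist x y)) \ (-L))) :=
              measure_mono (sub_diff_subset K L x y)
          _ = volume (((-L) + Metric.closedBall 0 (dist x y)) \ (-L)) :=
              measure_vadd _ _ _

lemma delta_mono (L : Set E) {r r' : ℝ} (h : r ≤ r') :
    volume (((-L) + Metric.closedBall 0 r) \ (-L))
      ≤ volume (((-L) + Metric.closedBall 0 r') \ (-L)) := by
  refine measure_mono (diff_subset_diff_left ?_)
  exact Set.add_subset_add_left (Metric.closedBall_subset_closedBall h)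

lemma delta_small (L : Set E) (hL : IsCompact L) (hLne : L.Nonempty)
    {η : ℝ≥0∞} (hη : 0 < η) :
    ∃ r : ℝ, 0 < r ∧ volume (((-L) + Metric.closedBall 0 r) \ (-L)) < η := by
  set s : ℕ → Set E := fun k => ((-L) + Metric.closedBall 0 (1 / (k + 1))) \ (-L) with hsdef
  have hLneg : IsCompact (-L : Set E) := hL.neg
  have hcomp : ∀ k : ℕ, IsCompact ((-L) + Metric.closedBall (0:E) (1 / (k + 1))) :=
    fun k => hLneg.add (isCompact_closedBall _ _)
  have hmeas : ∀ k, NullMeasurableSet (s k) volume := fun k =>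
    (((hcomp k).measurableSet).diff hLneg.measurableSet).nullMeasurableSet
  have hanti : Antitone s := by
    intro k k' hkk'
    refine diff_subset_diff_left (Set.add_subset_add_left
      (Metric.closedBall_subset_closedBall ?_))
    have h1 : (0:ℝ) < (k:ℝ) + 1 := by positivity
    have h2 : (k:ℝ) + 1 ≤ (k':ℝ) + 1 := by
      have : (k:ℝ) ≤ k' := Nat.cast_le.mpr hkk'
      linarith
    exact one_div_le_one_div_of_le h1 h2
  have hfin : ∃ k, volume (s k) ≠ ∞ :=
    ⟨0, ((measure_mono diff_subset).trans_lt (hcomp 0).measure_lt_top).ne⟩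
  have hiInter : (⋂ k, s k) = ∅ := by
    rw [Set.eq_empty_iff_forall_notMem]
    intro z hz
    rw [Set.mem_iInter] at hz
    have hznot : z ∉ (-L : Set E) := (hz 0).2
    have hinf : Metric.infDist z (-L) ≤ 0 := by
      refine ge_of_tendsto tendsto_one_div_add_atTop_nhds_zero_nat ?_
      refine Filter.Eventually.of_forall fun k => ?_
      obtain ⟨hz1, _⟩ := hz k
      rw [Set.mem_add] at hz1
      obtain ⟨m, hm, d, hd, hmd⟩ := hz1
      rw [Metric.mem_closedBall, dist_zero_right] at hd
      calc Metric.infDist z (-L) ≤ dist z m := Metric.infDist_le_dist_of_mem hm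
        _ = ‖d‖ := by rw [← hmd]; rw [dist_eq_norm]; congr 1; module
        _ ≤ 1 / (k + 1) := hd
    have hz0 : Metric.infDist z (-L) = 0 :=
      le_antisymm hinf Metric.infDist_nonneg
    exact hznot ((hLneg.isClosed.mem_iff_infDist_zero (hLne.neg)).mpr hz0)
  have htend := tendsto_measure_iInter_atTop hmeas hanti hfin
  rw [hiInter, measure_empty] at htend
  have : ∀ᶠ k in Filter.atTop, volume (s k) < η :=
    htend.eventually_lt_const hη
  obtain ⟨k, hk⟩ := this.exists
  exact ⟨1 / (k + 1), by positivity, hk⟩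

lemma isOpen_gt_measure (K L : Set E) (hL : IsCompact L) (hLne : L.Nonempty)
    (hKfin : volume K ≠ ∞) (c : ℝ≥0∞) :
    IsOpen {x : E | c < volume (K ∩ ({x} - L))} := by
  rw [Metric.isOpen_iff]
  intro x₀ hx₀
  rw [mem_setOf_eq] at hx₀
  have hFfin : volume (K ∩ ({x₀} - L)) ≠ ∞ :=
    ((measure_mono inter_subset_left).trans_lt hKfin.lt_top).ne
  have hη : 0 < volume (K ∩ ({x₀} - L)) - c := tsub_pos_of_lt hx₀
  obtain ⟨r, hr0, hr⟩ := delta_small L hL hLne hη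
  refine ⟨r, hr0, fun y hy => ?_⟩
  rw [mem_setOf_eq]
  by_contra h
  rw [not_lt] at h
  have hb := f_bound K L x₀ y
  have hcne : c ≠ ∞ := ne_top_of_lt hx₀
  have hstep : volume (K ∩ ({x₀} - L)) < volume (K ∩ ({x₀} - L)) := by
    calc volume (K ∩ ({x₀} - L))
        ≤ volume (K ∩ ({y} - L))
          + volume (((-L) + Metric.closedBall 0 (dist x₀ y)) \ (-L)) := hb
      _ ≤ c + volume (((-L) + Metric.closedBall 0 r) \ (-L)) := by
          refine add_le_add h (delta_mono L ?_)
          rw [dist_comm]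
          exact (Metric.mem_ball.mp hy).le
      _ < c + (volume (K ∩ ({x₀} - L)) - c) :=
          ENNReal.add_lt_add_left hcne hr
      _ = volume (K ∩ ({x₀} - L)) := add_tsub_cancel_of_le hx₀.le
  exact absurd hstep (lt_irrefl _)

lemma isClosed_ge_measure (K L : Set E) (hL : IsCompact L) (hLne : L.Nonempty)
    (hKfin : volume K ≠ ∞) (c : ℝ≥0∞) :
    IsClosed {x : E | c ≤ volume (K ∩ ({x} - L))} := by
  rw [← isOpen_compl_iff]
  rw [show {x : E | c ≤ volume (K ∩ ({x} - L))}ᶜ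
      = {x : E | volume (K ∩ ({x} - L)) < c} from by ext x; simp [not_le]]
  rw [Metric.isOpen_iff]
  intro x₀ hx₀
  rw [mem_setOf_eq] at hx₀
  have hFfin : volume (K ∩ ({x₀} - L)) ≠ ∞ :=
    ((measure_mono inter_subset_left).trans_lt hKfin.lt_top).ne
  have hη : 0 < c - volume (K ∩ ({x₀} - L)) := tsub_pos_of_lt hx₀
  obtain ⟨r, hr0, hr⟩ := delta_small L hL hLne hη
  refine ⟨r, hr0, fun y hy => ?_⟩
  rw [mem_setOf_eq]
  calc volume (K ∩ ({y} - L))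
      ≤ volume (K ∩ ({x₀} - L))
        + volume (((-L) + Metric.closedBall 0 (dist y x₀)) \ (-L)) := f_bound K L y x₀
    _ ≤ volume (K ∩ ({x₀} - L)) + volume (((-L) + Metric.closedBall 0 r) \ (-L)) :=
        add_le_add_right (delta_mono L (Metric.mem_ball.mp hy).le) _
    _ < volume (K ∩ ({x₀} - L)) + (c - volume (K ∩ ({x₀} - L))) :=
        ENNReal.add_lt_add_left hFfin hr
    _ = c := add_tsub_cancel_of_le hx₀.le

end Continuity

theorem convBody_boundary (n : ℕ) (K L : Set (EuclideanSpace ℝ (Fin n)))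
    (hK : IsCompact K) (hKc : Convex ℝ K) (hKi : (interior K).Nonempty)
    (hL : IsCompact L) (hLc : Convex ℝ L) (hLi : (interior L).Nonempty)
    (θ : ℝ) (hθ : θ ∈ Set.Ico (0 : ℝ) 1) :
    frontier (convBody n θ K L) =
      {x ∈ K + L |
        volume (K ∩ ({x} - L)) =
          ENNReal.ofReal θ * ⨆ z : EuclideanSpace ℝ (Fin n), volume (K ∩ ({z} - L))} := by
  obtain ⟨hθ0, hθ1⟩ := hθ
  set θ' := ENNReal.ofReal θ with hθ'def
  set M := ⨆ z : EuclideanSpace ℝ (Fin n), volume (K ∩ ({z} - L)) with hMdef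
  set C := convBody n θ K L with hCdef
  have hCrfl : C = {x : EuclideanSpace ℝ (Fin n) |
      x ∈ K + L ∧ θ' * M ≤ volume (K ∩ ({x} - L))} := rfl
  have hKfin : volume K ≠ ∞ := hK.measure_lt_top.ne
  have hFle : ∀ x : EuclideanSpace ℝ (Fin n), volume (K ∩ ({x} - L)) ≤ volume K :=
    fun x => measure_mono inter_subset_left
  have hMfin : M ≠ ∞ := by
    rw [hMdef]; exact ((iSup_le hFle).trans_lt hKfin.lt_top).ne
  have hLne : L.Nonempty := hLi.mono interior_subset
  have hmem : ∀ x : EuclideanSpace ℝ (Fin n),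
      (K ∩ ({x} - L)).Nonempty ↔ x ∈ K + L := by
    intro x
    constructor
    · rintro ⟨k, hk, hkL⟩
      rw [singleton_sub_eq] at hkL
      obtain ⟨l, hl, rfl⟩ := hkL
      rw [Set.mem_add]
      exact ⟨x - l, hk, l, hl, by module⟩
    · intro hx
      rw [Set.mem_add] at hx
      obtain ⟨k, hk, l, hl, rfl⟩ := hx
      refine ⟨k, hk, ?_⟩
      rw [singleton_sub_eq]
      exact ⟨l, hl, by module⟩
  have hpos0 : 0 < M := by
    obtain ⟨k₀, hk₀⟩ := hKi
    obtain ⟨l₀, hl₀⟩ := hLi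
    have hOopen : IsOpen (interior K ∩ ({k₀ + l₀} - interior L)) := by
      refine IsOpen.inter isOpen_interior ?_
      rw [singleton_sub_eq]
      exact (Homeomorph.subLeft (k₀ + l₀)).isOpenMap _ isOpen_interior
    have hmemO : k₀ ∈ interior K ∩ ({k₀ + l₀} - interior L) := by
      refine ⟨hk₀, ?_⟩
      rw [singleton_sub_eq]
      exact ⟨l₀, hl₀, by module⟩
    have hOsub : interior K ∩ ({k₀ + l₀} - interior L) ⊆ K ∩ ({k₀ + l₀} - L) :=
      inter_subset_inter interior_subset (Set.sub_subset_sub_left interior_subset)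
    have h1 : 0 < volume (K ∩ ({k₀ + l₀} - L)) :=
      lt_of_lt_of_le (hOopen.measure_pos volume ⟨k₀, hmemO⟩) (measure_mono hOsub)
    rw [hMdef]
    exact lt_of_lt_of_le h1
      (le_iSup (fun z : EuclideanSpace ℝ (Fin n) => volume (K ∩ ({z} - L))) (k₀ + l₀))
  have hθ'1 : θ' < 1 := ENNReal.ofReal_lt_one.mpr hθ1
  have hθM_lt : θ' * M < M := by
    calc θ' * M < 1 * M := (ENNReal.mul_lt_mul_iff_left hpos0.ne' hMfin).mpr hθ'1
      _ = M := one_mul M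
  obtain ⟨x₀, hx₀⟩ : ∃ x₀ : EuclideanSpace ℝ (Fin n),
      θ' * M < volume (K ∩ ({x₀} - L)) := by
    have h' : θ' * M < ⨆ z : EuclideanSpace ℝ (Fin n), volume (K ∩ ({z} - L)) := by
      rw [← hMdef]; exact hθM_lt
    exact lt_iSup_iff.mp h'
  have hx₀KL : x₀ ∈ K + L :=
    (hmem x₀).mp (nonempty_of_measure_ne_zero (lt_of_le_of_lt (zero_le) hx₀).ne')
  have hincl : ∀ (a b : ℝ), 0 ≤ a → 0 ≤ b → a + b = 1 →
      ∀ y z : EuclideanSpace ℝ (Fin n),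
      a • (K ∩ ({y} - L)) + b • (K ∩ ({z} - L)) ⊆ K ∩ ({a • y + b • z} - L) := by
    intro a b ha hb hab y z p hp
    rw [Set.mem_add] at hp
    obtain ⟨p₁', hp₁', p₂', hp₂', rfl⟩ := hp
    obtain ⟨p₁, ⟨hp₁K, hp₁L⟩, rfl⟩ := Set.mem_smul_set.mp hp₁'
    obtain ⟨p₂, ⟨hp₂K, hp₂L⟩, rfl⟩ := Set.mem_smul_set.mp hp₂'
    refine ⟨hKc hp₁K hp₂K ha hb hab, ?_⟩
    rw [singleton_sub_eq] at hp₁L hp₂L ⊢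
    obtain ⟨l₁, hl₁, hpl₁⟩ := hp₁L
    obtain ⟨l₂, hl₂, hpl₂⟩ := hp₂L
    refine ⟨a • l₁ + b • l₂, hLc hl₁ hl₂ ha hb hab, ?_⟩
    rw [← hpl₁, ← hpl₂]
    module
  have hFcomp : ∀ y : EuclideanSpace ℝ (Fin n), IsCompact (K ∩ ({y} - L)) := by
    intro y
    refine hK.inter_right ?_
    rw [singleton_sub_eq]
    exact (hL.image (continuous_const.sub continuous_id)).isClosed
  have hFconv : ∀ y : EuclideanSpace ℝ (Fin n), Convex ℝ (K ∩ ({y} - L)) :=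
    fun y => hKc.inter ((convex_singleton y).sub hLc)
  have hOgt : IsOpen {x : EuclideanSpace ℝ (Fin n) |
      θ' * M < volume (K ∩ ({x} - L))} := isOpen_gt_measure K L hL hLne hKfin _
  have hCge : IsClosed {x : EuclideanSpace ℝ (Fin n) |
      θ' * M ≤ volume (K ∩ ({x} - L))} := isClosed_ge_measure K L hL hLne hKfin _
  have hKLclosed : IsClosed (K + L) := (hK.add hL).isClosed
  have hOsubC : {x : EuclideanSpace ℝ (Fin n) | θ' * M < volume (K ∩ ({x} - L))} ⊆ C := by
    intro y hy
    rw [mem_setOf_eq] at hy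
    rw [hCrfl]
    exact ⟨(hmem y).mp (nonempty_of_measure_ne_zero
      (lt_of_le_of_lt (zero_le) hy).ne'), hy.le⟩
  have hCsubD : C ⊆ {x : EuclideanSpace ℝ (Fin n) |
      θ' * M ≤ volume (K ∩ ({x} - L))} ∩ (K + L) := by
    rw [hCrfl]; exact fun x hx => ⟨hx.2, hx.1⟩
  ext x
  simp only [mem_setOf_eq]
  constructor
  · intro hx
    have hxcl : x ∈ closure C := frontier_subset_closure hx
    have hxD := closure_minimal hCsubD (hCge.inter hKLclosed) hxcl
    have hxint : x ∉ interior C := hx.2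
    refine ⟨hxD.2, ?_⟩
    by_contra hne
    have hlt : θ' * M < volume (K ∩ ({x} - L)) :=
      lt_of_le_of_ne hxD.1 (fun h => hne h.symm)
    exact hxint (hOgt.subset_interior_iff.mpr hOsubC hlt)
  · rintro ⟨hxKL, hxeq⟩
    have hxC : x ∈ C := by rw [hCrfl]; exact ⟨hxKL, hxeq.ge⟩
    refine ⟨subset_closure hxC, ?_⟩
    intro hxint
    obtain ⟨ε, hε0, hball⟩ := Metric.mem_nhds_iff.mp (mem_interior_iff_mem_nhds.mp hxint)
    set t : ℝ := ε / (2 * (‖x - x₀‖ + 1)) with htdef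
    have hnorm0 : (0:ℝ) < ‖x - x₀‖ + 1 := by positivity
    have ht0 : 0 < t := by positivity
    set y := x + t • (x - x₀) with hydef
    have hyball : y ∈ Metric.ball x ε := by
      rw [Metric.mem_ball, dist_eq_norm]
      have hyx : y - x = t • (x - x₀) := by rw [hydef]; module
      rw [hyx, norm_smul, Real.norm_eq_abs, abs_of_pos ht0]
      have h1 : t * ‖x - x₀‖ ≤ t * (‖x - x₀‖ + 1) :=
        mul_le_mul_of_nonneg_left (by linarith) ht0.le
      have h2 : t * (‖x - x₀‖ + 1) = ε / 2 := by
        rw [htdef]; field_simp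
      linarith
    have hyC : y ∈ C := hball hyball
    have hyKL : y ∈ K + L := by rw [hCrfl] at hyC; exact hyC.1
    have hyge : θ' * M ≤ volume (K ∩ ({y} - L)) := by
      rw [hCrfl] at hyC; exact hyC.2
    set a := 1 / (1 + t) with hadef
    set b := t / (1 + t) with hbdef
    have h1t : (0:ℝ) < 1 + t := by linarith
    have ha : 0 < a := by positivity
    have hb : 0 < b := by positivity
    have hab : a + b = 1 := by rw [hadef, hbdef]; field_simp
    have hxcomb : x = a • y + b • x₀ := by
      have key : (1 + t) • x = y + t • x₀ := by
        rw [hydef]; module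
      have haone : a * (1 + t) = 1 := by rw [hadef]; field_simp
      have hbat : a * t = b := by rw [hadef, hbdef]; field_simp
      calc x = (a * (1 + t)) • x := by rw [haone, one_smul]
        _ = a • ((1 + t) • x) := by rw [mul_smul]
        _ = a • (y + t • x₀) := by rw [key]
        _ = a • y + (a * t) • x₀ := by rw [smul_add, mul_smul]
        _ = a • y + b • x₀ := by rw [hbat]
    have hAne : (K ∩ ({y} - L)).Nonempty := (hmem y).mpr hyKL
    have hBne : (K ∩ ({x₀} - L)).Nonempty := (hmem x₀).mpr hx₀KL
    have hsub2 : a • (K ∩ ({y} - L)) + b • (K ∩ ({x₀} - L)) ⊆ K ∩ ({x} - L) := by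
      have h := hincl a b ha.le hb.le hab y x₀
      rwa [← hxcomb] at h
    rcases eq_or_ne (θ' * M) 0 with hzero | hnz
    · obtain ⟨p, hp⟩ := hAne
      have himg : (fun q => a • p + b • q) '' (K ∩ ({x₀} - L)) ⊆ K ∩ ({x} - L) := by
        rintro _ ⟨q, hq, rfl⟩
        refine hsub2 ?_
        rw [Set.mem_add]
        exact ⟨a • p, smul_mem_smul_set hp, b • q, smul_mem_smul_set hq, rfl⟩
      have heq : (fun q => a • p + b • q) '' (K ∩ ({x₀} - L))
          = (a • p) +ᵥ (b • (K ∩ ({x₀} - L))) := by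
        ext z
        simp only [mem_image, Set.mem_vadd_set, Set.mem_smul_set, vadd_eq_add]
        constructor
        · rintro ⟨q, hq, rfl⟩; exact ⟨b • q, ⟨q, hq, rfl⟩, rfl⟩
        · rintro ⟨_, ⟨q, hq, rfl⟩, rfl⟩; exact ⟨q, hq, rfl⟩
      have hvol : 0 < volume (K ∩ ({x} - L)) := by
        refine lt_of_lt_of_le ?_ (measure_mono himg)
        rw [heq, measure_vadd, Measure.addHaar_smul]
        refine ENNReal.mul_pos ?_ ?_
        · exact (ENNReal.ofReal_pos.mpr (by positivity)).ne'
        · exact (lt_of_le_of_lt (zero_le) hx₀).ne'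
      rw [hxeq, hzero] at hvol
      exact absurd hvol (lt_irrefl _)
    · have hθMfin : θ' * M ≠ ∞ := ENNReal.mul_ne_top ENNReal.ofReal_ne_top hMfin
      have hbm := bm_euc ha hb hab (hFcomp y) (hFconv y) hAne (hFcomp x₀) (hFconv x₀) hBne
      have hchain : θ' * M < volume (K ∩ ({x} - L)) := by
        calc θ' * M = (θ' * M) ^ a * (θ' * M) ^ b := by
              rw [← ENNReal.rpow_add _ _ hnz hθMfin, hab, ENNReal.rpow_one]
          _ < (θ' * M) ^ a * (volume (K ∩ ({x₀} - L))) ^ b := by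
              refine (ENNReal.mul_lt_mul_iff_right ?_ ?_).mpr (ENNReal.rpow_lt_rpow hx₀ hb)
              · exact (ENNReal.rpow_pos (pos_iff_ne_zero.mpr hnz) hθMfin).ne'
              · exact ENNReal.rpow_ne_top_of_nonneg ha.le hθMfin
          _ ≤ (volume (K ∩ ({y} - L))) ^ a * (volume (K ∩ ({x₀} - L))) ^ b :=
              mul_le_mul_left (ENNReal.rpow_le_rpow hyge ha.le) _
          _ ≤ volume (a • (K ∩ ({y} - L)) + b • (K ∩ ({x₀} - L))) := hbm
          _ ≤ volume (K ∩ ({x} - L)) := measure_mono hsub2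
      rw [hxeq] at hchain
      exact absurd hchain (lt_irrefl _)
end
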